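/- arXiv:2009.00874 — 5 statements merged into one kernel-verified Lean document; each statement's English description precedes it below -/
import Mathlib

section
/- For each j ∈ {1,…,d}, the two cost-allocation formulas for the Shapley effect agree: (1/d) Σ_{u⊆{1,…,d}∖{j}} C(d−1,|u|)^{−1} (τ̲²_{u∪{j}} − τ̲²_u) = (1/d) Σ_{u⊆{1,…,d}∖{j}} C(d−1,|u|)^{−1} (τ̄²_{u∪{j}} − τ̄²_u), where C(n,k) denotes the binomial coefficient. -/
open MeasureTheory Finset

/-- The ANOVA decomposition component `f_u`, defined recursively by
`f_∅ = μ` (the mean) and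
`f_u(x) = ∫ f(x_u, y_{-u}) ρ_{-u}(y_{-u}) dy_{-u} - ∑_{v ⊊ u} f_v(x)`. -/
noncomputable def anova {d : ℕ} (μ : Fin d → Measure ℝ) (f : (Fin d → ℝ) → ℝ) :
    Finset (Fin d) → (Fin d → ℝ) → ℝ := fun u x =>
  (∫ y, f (fun i => if i ∈ u then x i else y i) ∂Measure.pi μ) -
    ∑ v ∈ (u.powerset.erase u).attach, anova μ f v.1 x
termination_by u => u.card
decreasing_by
  exact Finset.card_lt_card (Finset.ssubset_iff_subset_ne.mpr
    ⟨Finset.mem_powerset.mp (Finset.mem_of_mem_erase v.2), Finset.ne_of_mem_erase v.2⟩)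

/-- The ANOVA variance component `σ_u² = ∫ (f_u)² dρ` (note that `f_u` depends only on
the coordinates in `u`, so this agrees with `∫_{Ω_u} (f_u(x_u))² ρ_u(x_u) dx_u`). -/
noncomputable def sigmaSq {d : ℕ} (μ : Fin d → Measure ℝ) (f : (Fin d → ℝ) → ℝ)
    (u : Finset (Fin d)) : ℝ :=
  ∫ x, (anova μ f u x) ^ 2 ∂Measure.pi μ

/-- The main effect `τ̲²_u = ∑_{∅ ≠ v ⊆ u} σ_v²` (equal to `0` for `u = ∅`). -/
noncomputable def mainEffect {d : ℕ} (μ : Fin d → Measure ℝ) (f : (Fin d → ℝ) → ℝ)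
    (u : Finset (Fin d)) : ℝ :=
  ∑ v ∈ u.powerset.erase ∅, sigmaSq μ f v

/-- The total effect `τ̄²_u = ∑_{∅ ≠ v ⊆ [1:d], v ∩ u ≠ ∅} σ_v²` (equal to `0` for `u = ∅`). -/
noncomputable def totalEffect {d : ℕ} (μ : Fin d → Measure ℝ) (f : (Fin d → ℝ) → ℝ)
    (u : Finset (Fin d)) : ℝ :=
  ∑ v ∈ (Finset.univ : Finset (Fin d)).powerset.filter (fun v => (v ∩ u).Nonempty),
    sigmaSq μ f v

/-- The Shapley effect
`φ_j = (1/d) ∑_{u ⊆ [1:d]∖{j}} C(d-1, |u|)⁻¹ (τ̄²_{u∪{j}} - τ̄²_u)`. -/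
noncomputable def shapley {d : ℕ} (μ : Fin d → Measure ℝ) (f : (Fin d → ℝ) → ℝ)
    (j : Fin d) : ℝ :=
  (1 / (d : ℝ)) * ∑ u ∈ (Finset.univ.erase j).powerset,
    ((d - 1).choose u.card : ℝ)⁻¹ *
      (totalEffect μ f (insert j u) - totalEffect μ f u)

section Aux

variable {d : ℕ} (μ : Fin d → Measure ℝ) (f : (Fin d → ℝ) → ℝ)

lemma mainEffect_diff' {j : Fin d} {u : Finset (Fin d)} (hj : j ∉ u) :
    (∑ v ∈ (insert j u).powerset.erase ∅, sigmaSq μ f v) -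
      ∑ v ∈ u.powerset.erase ∅, sigmaSq μ f v =
    ∑ v ∈ Finset.univ.powerset.filter (fun v => j ∈ v ∧ v ⊆ insert j u),
      sigmaSq μ f v := by
  have hsub : u.powerset.erase ∅ ⊆ (insert j u).powerset.erase ∅ := by
    intro v hv
    simp only [mem_erase, mem_powerset] at hv ⊢
    exact ⟨hv.1, hv.2.trans (subset_insert _ _)⟩
  rw [← Finset.sum_sdiff hsub, add_sub_cancel_right]
  apply Finset.sum_congr _ (fun _ _ => rfl)
  ext v
  simp only [mem_sdiff, mem_erase, mem_powerset, mem_filter, subset_univ, true_and]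
  constructor
  · rintro ⟨⟨hne, hsub'⟩, h⟩
    push_neg at h
    have hvu : ¬ v ⊆ u := fun hvu => h (nonempty_iff_ne_empty.mpr hne) hvu
    obtain ⟨x, hxv, hxu⟩ := not_subset.mp hvu
    have := hsub' hxv
    rcases mem_insert.mp this with h1 | h1
    · exact ⟨h1 ▸ hxv, hsub'⟩
    · exact absurd h1 hxu
  · rintro ⟨hjv, hsub'⟩
    refine ⟨⟨?_, hsub'⟩, ?_⟩
    · rintro rfl; exact absurd hjv (notMem_empty j)
    · rintro ⟨-, hvu⟩; exact hj (hvu hjv)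

lemma totalEffect_diff' {j : Fin d} {u : Finset (Fin d)} (hj : j ∉ u) :
    totalEffect μ f (insert j u) - totalEffect μ f u =
    ∑ v ∈ Finset.univ.powerset.filter (fun v => j ∈ v ∧ v ∩ u = ∅),
      sigmaSq μ f v := by
  unfold totalEffect
  have hsub : Finset.univ.powerset.filter (fun v => (v ∩ u).Nonempty) ⊆
      Finset.univ.powerset.filter (fun v => (v ∩ (insert j u)).Nonempty) := by
    intro v hv
    simp only [mem_filter] at hv ⊢
    obtain ⟨h1, x, hx⟩ := hv
    exact ⟨h1, x, by simp only [mem_inter] at hx ⊢; exact ⟨hx.1, mem_insert_of_mem hx.2⟩⟩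
  rw [← Finset.sum_sdiff hsub, add_sub_cancel_right]
  apply Finset.sum_congr _ (fun _ _ => rfl)
  ext v
  simp only [mem_sdiff, mem_filter, mem_powerset, subset_univ, true_and, not_and]
  constructor
  · rintro ⟨hx, h2⟩
    have h2' : v ∩ u = ∅ := not_nonempty_iff_eq_empty.mp (h2)
    obtain ⟨x, hx⟩ := hx
    rw [mem_inter, mem_insert] at hx
    rcases hx.2 with h1 | h1
    · exact ⟨h1 ▸ hx.1, h2'⟩
    · exact absurd (mem_inter.mpr ⟨hx.1, h1⟩) (by simp [h2'])
  · rintro ⟨hjv, hvu⟩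
    refine ⟨⟨j, mem_inter.mpr ⟨hjv, mem_insert_self _ _⟩⟩, by simp [hvu]⟩

end Aux

/-- The two cost-allocation (Shapley) formulas, based on main effects and on total
effects respectively, agree. -/
theorem shapley_main_eq_total {d : ℕ} (μ : Fin d → Measure ℝ)
    [∀ i, IsProbabilityMeasure (μ i)] (f : (Fin d → ℝ) → ℝ)
    (hf : MemLp f 2 (Measure.pi μ)) (j : Fin d) :
    (1 / (d : ℝ)) * ∑ u ∈ (Finset.univ.erase j).powerset,
        ((d - 1).choose u.card : ℝ)⁻¹ *
          (mainEffect μ f (insert j u) - mainEffect μ f u) =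
    (1 / (d : ℝ)) * ∑ u ∈ (Finset.univ.erase j).powerset,
        ((d - 1).choose u.card : ℝ)⁻¹ *
          (totalEffect μ f (insert j u) - totalEffect μ f u) := by
  congr 1
  set B := (Finset.univ : Finset (Fin d)).erase j with hB
  have hBcard : B.card = d - 1 := by
    rw [hB, Finset.card_erase_of_mem (mem_univ j), Finset.card_univ, Fintype.card_fin]
  refine Finset.sum_nbij' (fun u => B \ u) (fun u => B \ u) ?_ ?_ ?_ ?_ ?_
  · intro u hu; exact mem_powerset.mpr (sdiff_subset)
  · intro u hu; exact mem_powerset.mpr (sdiff_subset)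
  · intro u hu; exact Finset.sdiff_sdiff_eq_self (mem_powerset.mp hu)
  · intro u hu; exact Finset.sdiff_sdiff_eq_self (mem_powerset.mp hu)
  · intro u hu
    have huB : u ⊆ B := mem_powerset.mp hu
    have hju : j ∉ u := fun h => (mem_erase.mp (huB h)).1 rfl
    have hju' : j ∉ B \ u := fun h => (mem_erase.mp (mem_sdiff.mp h).1).1 rfl
    have hcard : (B \ u).card = d - 1 - u.card := by
      rw [card_sdiff_of_subset huB, hBcard]
    have hchoose : ((d - 1).choose (B \ u).card : ℝ) = ((d - 1).choose u.card : ℝ) := by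
      have hle : u.card ≤ d - 1 := hBcard ▸ card_le_card huB
      rw [hcard, Nat.choose_symm hle]
    rw [hchoose]
    congr 1
    rw [show mainEffect μ f (insert j u) - mainEffect μ f u =
        ∑ v ∈ Finset.univ.powerset.filter (fun v => j ∈ v ∧ v ⊆ insert j u),
          sigmaSq μ f v from mainEffect_diff' μ f hju,
      totalEffect_diff' μ f hju']
    apply Finset.sum_congr _ (fun _ _ => rfl)
    ext v
    simp only [mem_filter, mem_powerset, subset_univ, true_and, and_congr_right_iff]
    intro hjv
    constructor
    · intro hsub
      rw [Finset.eq_empty_iff_forall_notMem]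
      intro x hx
      rw [mem_inter, mem_sdiff] at hx
      rcases mem_insert.mp (hsub hx.1) with h1 | h1
      · exact (mem_erase.mp hx.2.1).1 h1
      · exact hx.2.2 h1
    · intro hemp x hxv
      by_cases hxj : x = j
      · exact hxj ▸ mem_insert_self _ _
      · by_cases hxu : x ∈ u
        · exact mem_insert_of_mem hxu
        · exact absurd (mem_inter.mpr ⟨hxv, mem_sdiff.mpr ⟨mem_erase.mpr ⟨hxj, mem_univ x⟩, hxu⟩⟩) (by rw [hemp]; exact notMem_empty x)
end

section
/- For each j ∈ {1,…,d}, the Shapley effect admits the ANOVA representation φ_j = Σ_{∅≠u⊆{1,…,d}, j∈u} σ_u² / |u|. -/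
open MeasureTheory Finset

open Finset in
open Finset

private lemma key_nat_sum (N n : ℕ) (hn : n ≤ N) :
    ∑ k ∈ Finset.range (n+1), (N-k).choose (n-k) = (N+1).choose n := by
  rw [← Finset.sum_range_reflect]
  have h1 : ∀ j ∈ Finset.range (n+1),
      (N - (n + 1 - 1 - j)).choose (n - (n + 1 - 1 - j)) = ((N-n)+j).choose (N-n) := by
    intro j hj
    have hj' : j ≤ n := Nat.lt_succ_iff.mp (Finset.mem_range.mp hj)
    have e1 : n + 1 - 1 - j = n - j := by omega
    have e2 : N - (n - j) = (N - n) + j := by omega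
    have e3 : n - (n - j) = j := by omega
    rw [e1, e2, e3, Nat.choose_symm_add]
  rw [Finset.sum_congr rfl h1]
  have h2 : ∑ m ∈ Finset.Icc (N-n) N, m.choose (N-n) = (N+1).choose (N-n+1) :=
    Nat.sum_Icc_choose N (N-n)
  rw [← Finset.Ico_add_one_right_eq_Icc, Finset.sum_Ico_eq_sum_range] at h2
  have e4 : N + 1 - (N - n) = n + 1 := by omega
  rw [e4] at h2
  have h3 : ∀ j ∈ Finset.range (n+1), ((N-n)+j).choose (N-n) = (N-n+j).choose (N-n) :=
    fun j _ => rfl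
  rw [Finset.sum_congr rfl h3, h2]
  have e5 : N - n + 1 = (N+1) - n := by omega
  rw [e5, Nat.choose_symm (by omega)]

private lemma key_sum (N n : ℕ) (hn : n ≤ N) :
    ∑ k ∈ Finset.range (n+1), ((n.choose k : ℝ) * ((N.choose k : ℝ))⁻¹)
      = ((N:ℝ)+1) / ((N:ℝ)+1-(n:ℝ)) := by
  have hstep : ∀ k ∈ Finset.range (n+1),
      (n.choose k : ℝ) * ((N.choose k : ℝ))⁻¹
        = ((N-k).choose (n-k) : ℝ) * ((N.choose n : ℝ))⁻¹ := by
    intro k hk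
    have hk' : k ≤ n := Nat.lt_succ_iff.mp (Finset.mem_range.mp hk)
    have h1 : (N.choose k : ℝ) ≠ 0 := by
      exact_mod_cast (Nat.choose_pos (hk'.trans hn)).ne'
    have h2 : (N.choose n : ℝ) ≠ 0 := by
      exact_mod_cast (Nat.choose_pos hn).ne'
    have hid := Nat.choose_mul (n := N) hk'
    have hidR : (N.choose n : ℝ) * (n.choose k : ℝ)
        = (N.choose k : ℝ) * ((N-k).choose (n-k) : ℝ) := by exact_mod_cast hid
    field_simp
    linarith [hidR]
  rw [Finset.sum_congr rfl hstep, ← Finset.sum_mul]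
  have hsum : ∑ k ∈ Finset.range (n+1), (((N-k).choose (n-k) : ℕ) : ℝ)
      = (((N+1).choose n : ℕ) : ℝ) := by exact_mod_cast key_nat_sum N n hn
  rw [hsum]
  have h2 : (N.choose n : ℝ) ≠ 0 := by exact_mod_cast (Nat.choose_pos hn).ne'
  have hden : ((N:ℝ)+1-(n:ℝ)) ≠ 0 := by
    have : (n:ℝ) ≤ N := by exact_mod_cast hn
    linarith
  have hid := Nat.choose_mul_succ_eq N n
  have hcast : (((N+1-n : ℕ)) : ℝ) = (N:ℝ)+1-(n:ℝ) := by
    have : n ≤ N + 1 := by omega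
    push_cast [Nat.cast_sub this]
    ring
  have hidR : (N.choose n : ℝ) * ((N:ℝ)+1) = ((N+1).choose n : ℝ) * ((N:ℝ)+1-(n:ℝ)) := by
    rw [← hcast]
    exact_mod_cast hid
  field_simp
  linarith [hidR]
open MeasureTheory Finset


/-- ANOVA representation of the Shapley effect: `φ_j = ∑_{u ∋ j} σ_u² / |u|`. -/
theorem shapley_eq_sum_sigmaSq_div_card {d : ℕ} (μ : Fin d → Measure ℝ)
    [∀ i, IsProbabilityMeasure (μ i)] (f : (Fin d → ℝ) → ℝ)
    (hf : MemLp f 2 (Measure.pi μ)) (j : Fin d) :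
    shapley μ f j =
      ∑ u ∈ (Finset.univ : Finset (Fin d)).powerset.filter (fun u => j ∈ u),
        sigmaSq μ f u / (u.card : ℝ) := by
  unfold shapley
  classical
  have hd : 0 < d := j.pos
  -- Step 1: difference of total effects
  have hdiff : ∀ u ∈ (Finset.univ.erase j).powerset,
      totalEffect μ f (insert j u) - totalEffect μ f u
        = ∑ v ∈ (Finset.univ : Finset (Fin d)).powerset,
            (if j ∈ v ∧ v ∩ u = ∅ then sigmaSq μ f v else 0) := by
    intro u hu
    have hju : j ∉ u := fun h =>
      (Finset.mem_erase.mp (Finset.mem_powerset.mp hu h)).1 rfl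
    unfold totalEffect
    rw [Finset.sum_filter, Finset.sum_filter, ← Finset.sum_sub_distrib]
    refine Finset.sum_congr rfl fun v _ => ?_
    by_cases h1 : (v ∩ u).Nonempty
    · have h2 : (v ∩ insert j u).Nonempty := by
        obtain ⟨x, hx⟩ := h1
        exact ⟨x, Finset.mem_inter.mpr ⟨(Finset.mem_inter.mp hx).1,
          Finset.mem_insert_of_mem (Finset.mem_inter.mp hx).2⟩⟩
      rw [if_pos h2, if_pos h1, sub_self, if_neg]
      rintro ⟨-, hvu⟩
      exact h1.ne_empty hvu
    · have hvu : v ∩ u = ∅ := Finset.not_nonempty_iff_eq_empty.mp h1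
      rw [if_neg h1, sub_zero]
      by_cases hjv : j ∈ v
      · rw [if_pos ⟨j, Finset.mem_inter.mpr ⟨hjv, Finset.mem_insert_self _ _⟩⟩,
          if_pos ⟨hjv, hvu⟩]
      · rw [if_neg, if_neg]
        · rintro ⟨h, -⟩; exact hjv h
        · rintro ⟨x, hx⟩
          rcases Finset.mem_inter.mp hx with ⟨hxv, hxu⟩
          rcases Finset.mem_insert.mp hxu with rfl | hxu
          · exact hjv hxv
          · exact absurd (Finset.mem_inter.mpr ⟨hxv, hxu⟩) (by rw [hvu]; simp)
  -- Step 2: swap sums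
  rw [Finset.sum_congr rfl fun u hu => by rw [hdiff u hu, Finset.mul_sum]]
  rw [Finset.sum_comm]
  -- Step 3: evaluate the inner sum for each v
  have hfilter : ∀ v : Finset (Fin d), j ∈ v →
      Finset.filter (fun u => v ∩ u = ∅) (Finset.univ.erase j).powerset
        = (Finset.univ \ v).powerset := by
    intro v hjv
    ext u
    simp only [Finset.mem_filter, Finset.mem_powerset]
    constructor
    · rintro ⟨hu, hvu⟩ x hx
      refine Finset.mem_sdiff.mpr ⟨Finset.mem_univ x, fun hxv => ?_⟩
      exact absurd (Finset.mem_inter.mpr ⟨hxv, hx⟩) (by rw [hvu]; simp)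
    · intro hu
      refine ⟨fun x hx => Finset.mem_erase.mpr ⟨?_, Finset.mem_univ x⟩, ?_⟩
      · rintro rfl; exact (Finset.mem_sdiff.mp (hu hx)).2 hjv
      · apply Finset.eq_empty_of_forall_notMem
        intro x hx
        exact (Finset.mem_sdiff.mp (hu (Finset.mem_inter.mp hx).2)).2
          (Finset.mem_inter.mp hx).1
  have hinner : ∀ v ∈ (Finset.univ : Finset (Fin d)).powerset,
      ∑ u ∈ (Finset.univ.erase j).powerset,
          ((d - 1).choose u.card : ℝ)⁻¹ * (if j ∈ v ∧ v ∩ u = ∅ then sigmaSq μ f v else 0)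
        = if j ∈ v then sigmaSq μ f v * ((d:ℝ) / (v.card:ℝ)) else 0 := by
    intro v _
    by_cases hjv : j ∈ v
    · rw [if_pos hjv]
      have h1 : ∀ u ∈ (Finset.univ.erase j).powerset,
          ((d - 1).choose u.card : ℝ)⁻¹ * (if j ∈ v ∧ v ∩ u = ∅ then sigmaSq μ f v else 0)
            = if v ∩ u = ∅ then ((d - 1).choose u.card : ℝ)⁻¹ * sigmaSq μ f v else 0 := by
        intro u _
        by_cases h : v ∩ u = ∅ <;> simp [h, hjv]
      rw [Finset.sum_congr rfl h1, ← Finset.sum_filter, hfilter v hjv]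
      have hcard : (Finset.univ \ v).card = d - v.card := by
        rw [Finset.card_sdiff_of_subset (Finset.subset_univ v), Finset.card_univ, Fintype.card_fin]
      have hv1 : 1 ≤ v.card := Finset.card_pos.mpr ⟨j, hjv⟩
      have hvd : v.card ≤ d := by
        simpa [Finset.card_univ] using Finset.card_le_univ v
      have hpow : ∑ u ∈ (Finset.univ \ v).powerset, ((d - 1).choose u.card : ℝ)⁻¹
          = (d:ℝ) / (v.card:ℝ) := by
        rw [Finset.powerset_card_disjiUnion]
        erw [Finset.sum_disjiUnion]
        have h2 : ∀ k ∈ Finset.range ((Finset.univ \ v).card + 1),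
            ∑ u ∈ Finset.powersetCard k (Finset.univ \ v),
                ((d - 1).choose u.card : ℝ)⁻¹
              = ((d - v.card).choose k : ℝ) * ((d - 1).choose k : ℝ)⁻¹ := by
          intro k _
          rw [Finset.sum_congr rfl fun u hu => by
            rw [(Finset.mem_powersetCard.mp hu).2]]
          rw [Finset.sum_const, Finset.card_powersetCard, hcard, nsmul_eq_mul]
        rw [Finset.sum_congr rfl h2, hcard,
          key_sum (d-1) (d - v.card) (Nat.sub_le_sub_left hv1 d)]
        have e1 : ((d - 1 : ℕ):ℝ) + 1 = (d:ℝ) := by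
          have h1d : (1:ℕ) ≤ d := hd
          push_cast [Nat.cast_sub h1d]; ring
        have e2 : ((d - v.card : ℕ):ℝ) = (d:ℝ) - (v.card:ℝ) := by
          push_cast [Nat.cast_sub hvd]; ring
        rw [e1, e2]
        ring_nf
      rw [← Finset.sum_mul, hpow]
      ring
    · simp [hjv]
  rw [Finset.sum_congr rfl hinner, Finset.mul_sum, Finset.sum_filter]
  refine Finset.sum_congr rfl fun v _ => ?_
  by_cases hjv : j ∈ v
  · rw [if_pos hjv, if_pos hjv]
    have hd' : (d:ℝ) ≠ 0 := Nat.cast_ne_zero.mpr hd.ne'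
    have hc : (v.card:ℝ) ≠ 0 :=
      Nat.cast_ne_zero.mpr (Finset.card_pos.mpr ⟨j, hjv⟩).ne'
    field_simp
  · simp [hjv]
end

section
/- For each j ∈ {1,…,d}, the Shapley effect is bracketed by the singleton main and total effects: τ̲²_{{j}} ≤ φ_j ≤ τ̄²_{{j}}. -/
open MeasureTheory Finset

lemma sigmaSq_nonneg {d : ℕ} (μ : Fin d → Measure ℝ) (f : (Fin d → ℝ) → ℝ)
    (u : Finset (Fin d)) : 0 ≤ sigmaSq μ f u :=
  integral_nonneg fun x => sq_nonneg _

/-- The Shapley effect is bracketed by the singleton main and total effects: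
`τ̲²_{j} ≤ φ_j ≤ τ̄²_{j}`. -/
theorem mainEffect_le_shapley_le_totalEffect {d : ℕ} (μ : Fin d → Measure ℝ)
    [∀ i, IsProbabilityMeasure (μ i)] (f : (Fin d → ℝ) → ℝ)
    (hf : MemLp f 2 (Measure.pi μ)) (j : Fin d) :
    mainEffect μ f {j} ≤ shapley μ f j ∧ shapley μ f j ≤ totalEffect μ f {j} := by
  classical
  have hd0 : 0 < d := j.pos
  have hdR : (0 : ℝ) < d := by exact_mod_cast hd0
  have hcard : (Finset.univ.erase j).card = d - 1 := by
    rw [Finset.card_erase_of_mem (Finset.mem_univ j), Finset.card_univ, Fintype.card_fin]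
  -- coefficients sum to d
  have hsum : ∑ u ∈ (Finset.univ.erase j).powerset, (((d - 1).choose u.card : ℕ) : ℝ)⁻¹
      = (d : ℝ) := by
    rw [Finset.sum_powerset_apply_card (fun k => (((d - 1).choose k : ℕ) : ℝ)⁻¹), hcard]
    have : ∀ m ∈ Finset.range (d - 1 + 1),
        (d - 1).choose m • (((d - 1).choose m : ℕ) : ℝ)⁻¹ = 1 := by
      intro m hm
      have hle : m ≤ d - 1 := Nat.lt_succ_iff.mp (Finset.mem_range.mp hm)
      have hpos : 0 < (d - 1).choose m := Nat.choose_pos hle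
      rw [nsmul_eq_mul, mul_inv_cancel₀ (by exact_mod_cast hpos.ne')]
    rw [Finset.sum_congr rfl this, Finset.sum_const, Finset.card_range, nsmul_eq_mul, mul_one]
    have : d - 1 + 1 = d := Nat.succ_pred_eq_of_pos hd0
    rw [this]
  -- difference of total effects
  set A : Finset (Fin d) → Finset (Finset (Fin d)) :=
    fun w => (Finset.univ : Finset (Fin d)).powerset.filter (fun v => (v ∩ w).Nonempty) with hA
  have hdiff : ∀ u ∈ (Finset.univ.erase j).powerset,
      totalEffect μ f (insert j u) - totalEffect μ f u
        = ∑ v ∈ A (insert j u) \ A u, sigmaSq μ f v := by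
    intro u hu
    have hsub : A u ⊆ A (insert j u) := by
      intro v hv
      simp only [hA, Finset.mem_filter] at hv ⊢
      exact ⟨hv.1, hv.2.mono (Finset.inter_subset_inter (subset_refl v) (Finset.subset_insert j u))⟩
    have := Finset.sum_sdiff (f := sigmaSq μ f) hsub
    simp only [totalEffect, hA]
    linarith [this]
  -- the singleton main effect
  have hmain : mainEffect μ f {j} = sigmaSq μ f {j} := by
    have : ({j} : Finset (Fin d)).powerset.erase ∅ = {({j} : Finset (Fin d))} := by
      ext v
      simp only [Finset.mem_erase, Finset.mem_powerset, Finset.subset_singleton_iff,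
        Finset.mem_singleton]
      constructor
      · rintro ⟨hne, h | h⟩
        · exact absurd h hne
        · exact h
      · rintro rfl
        exact ⟨Finset.singleton_ne_empty j, Or.inr rfl⟩
    rw [mainEffect, this, Finset.sum_singleton]
  -- per-u bounds on the difference
  have hlow : ∀ u ∈ (Finset.univ.erase j).powerset,
      sigmaSq μ f {j} ≤ totalEffect μ f (insert j u) - totalEffect μ f u := by
    intro u hu
    rw [hdiff u hu]
    have hju : j ∉ u := fun h =>
      (Finset.mem_erase.mp (Finset.mem_powerset.mp hu h)).1 rfl
    have h1 : ({j} : Finset (Fin d)) ∈ A (insert j u) :=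
      Finset.mem_filter.mpr ⟨Finset.mem_powerset.mpr (Finset.subset_univ _), ⟨j, by simp⟩⟩
    have h2 : ({j} : Finset (Fin d)) ∉ A u := by
      intro h
      obtain ⟨x, hx⟩ := (Finset.mem_filter.mp h).2
      rw [Finset.mem_inter, Finset.mem_singleton] at hx
      exact hju (hx.1 ▸ hx.2)
    have hmem : ({j} : Finset (Fin d)) ∈ A (insert j u) \ A u :=
      Finset.mem_sdiff.mpr ⟨h1, h2⟩
    exact Finset.single_le_sum (fun v _ => sigmaSq_nonneg μ f v) hmem
  have hhigh : ∀ u ∈ (Finset.univ.erase j).powerset,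
      totalEffect μ f (insert j u) - totalEffect μ f u ≤ totalEffect μ f {j} := by
    intro u hu
    rw [hdiff u hu, totalEffect]
    apply Finset.sum_le_sum_of_subset_of_nonneg
    · intro v hv
      rw [Finset.mem_sdiff] at hv
      have hv1 := Finset.mem_filter.mp hv.1
      have hv2 : ¬ (v ∩ u).Nonempty := fun hne =>
        hv.2 (Finset.mem_filter.mpr ⟨hv1.1, hne⟩)
      refine Finset.mem_filter.mpr ⟨Finset.mem_powerset.mpr (Finset.subset_univ _), ?_⟩
      obtain ⟨x, hx⟩ := hv1.2
      rw [Finset.mem_inter, Finset.mem_insert] at hx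
      have hjv : j ∈ v := by
        rcases hx.2 with h | h
        · exact h ▸ hx.1
        · exact absurd ⟨x, Finset.mem_inter.mpr ⟨hx.1, h⟩⟩ hv2
      exact ⟨j, Finset.mem_inter.mpr ⟨hjv, Finset.mem_singleton_self j⟩⟩
    · intro v _ _
      exact sigmaSq_nonneg μ f v
  -- coefficient nonnegativity
  have hc : ∀ u : Finset (Fin d), (0 : ℝ) ≤ (((d - 1).choose u.card : ℕ) : ℝ)⁻¹ := by
    intro u; positivity
  constructor
  · rw [hmain, shapley]
    have : (d : ℝ) * sigmaSq μ f {j}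
        ≤ ∑ u ∈ (Finset.univ.erase j).powerset, ((d - 1).choose u.card : ℝ)⁻¹ *
          (totalEffect μ f (insert j u) - totalEffect μ f u) := by
      calc (d : ℝ) * sigmaSq μ f {j}
          = ∑ u ∈ (Finset.univ.erase j).powerset,
              ((d - 1).choose u.card : ℝ)⁻¹ * sigmaSq μ f {j} := by
            rw [← Finset.sum_mul, hsum]
        _ ≤ _ := Finset.sum_le_sum fun u hu =>
            mul_le_mul_of_nonneg_left (hlow u hu) (hc u)
    rw [one_div]
    calc sigmaSq μ f {j} = (d : ℝ)⁻¹ * ((d : ℝ) * sigmaSq μ f {j}) := by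
          rw [← mul_assoc, inv_mul_cancel₀ hdR.ne', one_mul]
      _ ≤ _ := mul_le_mul_of_nonneg_left this (inv_nonneg.mpr hdR.le)
  · rw [shapley]
    have : ∑ u ∈ (Finset.univ.erase j).powerset, ((d - 1).choose u.card : ℝ)⁻¹ *
          (totalEffect μ f (insert j u) - totalEffect μ f u)
        ≤ (d : ℝ) * totalEffect μ f {j} := by
      calc ∑ u ∈ (Finset.univ.erase j).powerset, ((d - 1).choose u.card : ℝ)⁻¹ *
            (totalEffect μ f (insert j u) - totalEffect μ f u)
          ≤ ∑ u ∈ (Finset.univ.erase j).powerset,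
              ((d - 1).choose u.card : ℝ)⁻¹ * totalEffect μ f {j} :=
            Finset.sum_le_sum fun u hu =>
              mul_le_mul_of_nonneg_left (hhigh u hu) (hc u)
        _ = (d : ℝ) * totalEffect μ f {j} := by rw [← Finset.sum_mul, hsum]
    rw [one_div]
    calc (d : ℝ)⁻¹ * ∑ u ∈ (Finset.univ.erase j).powerset, ((d - 1).choose u.card : ℝ)⁻¹ *
          (totalEffect μ f (insert j u) - totalEffect μ f u)
        ≤ (d : ℝ)⁻¹ * ((d : ℝ) * totalEffect μ f {j}) :=
          mul_le_mul_of_nonneg_left this (inv_nonneg.mpr hdR.le)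
      _ = totalEffect μ f {j} := by
          rw [← mul_assoc, inv_mul_cancel₀ hdR.ne', one_mul]
end

section
/- For each j ∈ {1,…,d}, the Shapley effect admits the averaged pick-freeze representation φ_j = (1/d) Σ_{ℓ=0}^{d−1} C(d−1,ℓ)^{−1} Σ_{u⊆{1,…,d}∖{j}, |u|=ℓ} ∫_Ω ∫_Ω g_u(x,y) ρ(x) ρ(y) dx dy, i.e., φ_j equals the expectation of g_{U_j(ℓ)}(x,y) where ℓ is uniform on {0,1,…,d−1}, U_j(ℓ) is a uniformly distributed subset of {1,…,d}∖{j} with cardinality ℓ, and x, y are independent with density ρ. -/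
open MeasureTheory Finset

/-- The pick-freeze integrand
`g_u(x,y) = (1/2)(f(x) - f(y_{u∪{j}}, x_{-(u∪{j})}))² - (1/2)(f(x) - f(y_u, x_{-u}))²`
for a fixed coordinate `j` and a subset `u ⊆ [1:d]∖{j}`. -/
noncomputable def gPF {d : ℕ} (f : (Fin d → ℝ) → ℝ) (j : Fin d) (u : Finset (Fin d))
    (x y : Fin d → ℝ) : ℝ :=
  (1 / 2) * (f x - f (fun i => if i ∈ insert j u then y i else x i)) ^ 2 -
    (1 / 2) * (f x - f (fun i => if i ∈ u then y i else x i)) ^ 2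

namespace PFAux

variable {d : ℕ} (μ : Fin d → Measure ℝ) [∀ i, IsProbabilityMeasure (μ i)]

/-- The mixing map: coordinates in `v` from the first argument, the rest from the second. -/
def Kmix (v : Finset (Fin d)) (p : (Fin d → ℝ) × (Fin d → ℝ)) : Fin d → ℝ :=
  fun i => if i ∈ v then p.1 i else p.2 i

lemma measurable_Kmix (v : Finset (Fin d)) : Measurable (Kmix (d := d) v) := by
  apply measurable_pi_lambda
  intro i
  by_cases h : i ∈ v <;> simp only [Kmix, h, if_true, if_false]
  · exact (measurable_pi_apply i).comp measurable_fst
  · exact (measurable_pi_apply i).comp measurable_snd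

lemma Kmix_mp (v : Finset (Fin d)) :
    MeasurePreserving (Kmix v) ((Measure.pi μ).prod (Measure.pi μ)) (Measure.pi μ) := by
  refine ⟨measurable_Kmix v, ?_⟩
  refine (Measure.pi_eq fun s hs => ?_).symm
  rw [Measure.map_apply (measurable_Kmix v) (MeasurableSet.univ_pi hs)]
  have hpre : Kmix v ⁻¹' (Set.univ.pi s) =
      (Set.univ.pi fun i => if i ∈ v then s i else Set.univ) ×ˢ
      (Set.univ.pi fun i => if i ∈ v then Set.univ else s i) := by
    ext p
    simp only [Set.mem_preimage, Set.mem_pi, Set.mem_univ, forall_true_left, Set.mem_prod, Kmix]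
    constructor
    · intro h
      constructor <;> intro i <;> by_cases hi : i ∈ v <;>
        simp only [hi, if_true, if_false, Set.mem_univ] <;> simpa [hi] using h i
    · rintro ⟨h1, h2⟩ i
      by_cases hi : i ∈ v
      · simpa [hi] using h1 i
      · simpa [hi] using h2 i
  rw [hpre, Measure.prod_prod, Measure.pi_pi, Measure.pi_pi, ← Finset.prod_mul_distrib]
  refine Finset.prod_congr rfl fun i _ => ?_
  by_cases hi : i ∈ v <;> simp [hi]

end PFAux

namespace PFAux2
open PFAux

section Helpers

variable {α β : Type*} [MeasurableSpace α] [MeasurableSpace β]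

lemma mp_fst (μa : Measure α) (μb : Measure β) [SFinite μa] [IsProbabilityMeasure μb] :
    MeasurePreserving Prod.fst (μa.prod μb) μa :=
  ⟨measurable_fst, by simp [Measure.map_fst_prod]⟩

lemma mp_snd (μa : Measure α) (μb : Measure β) [IsProbabilityMeasure μa] [SFinite μb] :
    MeasurePreserving Prod.snd (μa.prod μb) μb :=
  ⟨measurable_snd, by simp [Measure.map_snd_prod]⟩

lemma mp_comp_memLp {ν : Measure α} {ρ : Measure β} {T : α → β}
    (hT : MeasurePreserving T ν ρ) {f : β → ℝ} (hf : MemLp f 2 ρ) :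
    MemLp (fun a => f (T a)) 2 ν := by
  rw [← hT.map_eq] at hf
  exact hf.comp_of_map hT.measurable.aemeasurable

lemma mp_integral {ν : Measure α} {ρ : Measure β} {T : α → β}
    (hT : MeasurePreserving T ν ρ) {g : β → ℝ} (hg : AEStronglyMeasurable g ρ) :
    ∫ a, g (T a) ∂ν = ∫ b, g b ∂ρ := by
  rw [← hT.map_eq] at hg ⊢
  exact (integral_map hT.measurable.aemeasurable hg).symm

lemma L2mul {ν : Measure α} {g1 g2 : α → ℝ} (h1 : MemLp g1 2 ν) (h2 : MemLp g2 2 ν) :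
    Integrable (fun a => g1 a * g2 a) ν := by
  have h := h2.smul (φ := g1) h1 (p := 2) (r := 1)
    (hpqr := ⟨by simp only [inv_one]; exact ENNReal.inv_two_add_inv_two⟩)
  rw [← memLp_one_iff_integrable]
  exact h

/-- Jensen's inequality `(∫ g)² ≤ ∫ g²` for probability measures. -/
lemma sq_integral_le {ν : Measure α} [IsProbabilityMeasure ν] {g : α → ℝ}
    (hgi : Integrable g ν) (hg2 : Integrable (fun a => (g a) ^ 2) ν) :
    (∫ a, g a ∂ν) ^ 2 ≤ ∫ a, (g a) ^ 2 ∂ν := by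
  set m := ∫ a, g a ∂ν with hm
  have h1 : ∀ a, (g a - m) ^ 2 = (g a) ^ 2 - (2 * m) * g a + m ^ 2 := fun a => by ring
  have h0 : 0 ≤ ∫ a, (g a - m) ^ 2 ∂ν := integral_nonneg fun a => sq_nonneg _
  have heq : ∫ a, (g a - m) ^ 2 ∂ν = ∫ a, (g a) ^ 2 ∂ν - m ^ 2 := by
    simp_rw [h1]
    have i1 : Integrable (fun a => g a ^ 2 - 2 * m * g a) ν := hg2.sub (hgi.const_mul _)
    rw [integral_add i1 (integrable_const _),
      integral_sub hg2 (hgi.const_mul _), integral_const_mul, integral_const]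
    simp only [measure_univ, probReal_univ, ENNReal.toReal_one, smul_eq_mul, one_mul, ← hm]
    ring
  linarith [heq ▸ h0]

end Helpers

end PFAux2

namespace PFAux3
open PFAux PFAux2

variable {d : ℕ} (μ : Fin d → Measure ℝ) [∀ i, IsProbabilityMeasure (μ i)]

/-- The projection `P_v f (x) = ∫ f(x_v, y_{-v}) dπ(y)`. -/
noncomputable def PvF (f : (Fin d → ℝ) → ℝ) (v : Finset (Fin d)) (x : Fin d → ℝ) : ℝ :=
  ∫ y, f (Kmix v (x, y)) ∂Measure.pi μ

lemma Kmix_univ (p : (Fin d → ℝ) × (Fin d → ℝ)) : Kmix Finset.univ p = p.1 := by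
  funext i; simp [Kmix]

lemma Pv_univ (f : (Fin d → ℝ) → ℝ) : PvF μ f Finset.univ = f := by
  funext x
  simp [PvF, Kmix_univ]

variable {f : (Fin d → ℝ) → ℝ}

lemma Pv_aesm (hf : AEStronglyMeasurable f (Measure.pi μ)) (v : Finset (Fin d)) :
    AEStronglyMeasurable (PvF μ f v) (Measure.pi μ) := by
  have hF : AEStronglyMeasurable (fun p => f (Kmix v p))
      ((Measure.pi μ).prod (Measure.pi μ)) :=
    hf.comp_quasiMeasurePreserving (Kmix_mp μ v).quasiMeasurePreserving
  exact hF.integral_prod_right'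

lemma Pv_memLp (hf : MemLp f 2 (Measure.pi μ)) (v : Finset (Fin d)) :
    MemLp (PvF μ f v) 2 (Measure.pi μ) := by
  have hF : MemLp (fun p => f (Kmix v p)) 2 ((Measure.pi μ).prod (Measure.pi μ)) :=
    mp_comp_memLp (Kmix_mp μ v) hf
  have hF2 : Integrable (fun p => (f (Kmix v p)) ^ 2) ((Measure.pi μ).prod (Measure.pi μ)) := by
    have := L2mul hF hF
    simpa [sq] using this
  have hFi : Integrable (fun p => f (Kmix v p)) ((Measure.pi μ).prod (Measure.pi μ)) :=
    hF.integrable one_le_two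
  have hH : Integrable (fun x => ∫ y, (f (Kmix v (x, y))) ^ 2 ∂Measure.pi μ) (Measure.pi μ) :=
    hF2.integral_prod_left
  rw [memLp_two_iff_integrable_sq (Pv_aesm μ hf.aestronglyMeasurable v)]
  refine Integrable.mono hH ?_ ?_
  · have := Pv_aesm μ hf.aestronglyMeasurable v
    exact this.pow 2
  · filter_upwards [hF2.prod_right_ae, hFi.prod_right_ae] with x h2 h1
    have hj := sq_integral_le h1 h2
    have hnn : 0 ≤ ∫ y, (f (Kmix v (x, y))) ^ 2 ∂Measure.pi μ :=
      integral_nonneg fun y => sq_nonneg _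
    rw [Real.norm_eq_abs, Real.norm_eq_abs, abs_of_nonneg (sq_nonneg _), abs_of_nonneg hnn]
    exact hj

end PFAux3

namespace PFAux4
open PFAux PFAux2 PFAux3

variable {d : ℕ} (μ : Fin d → Measure ℝ) [∀ i, IsProbabilityMeasure (μ i)]
variable (f : (Fin d → ℝ) → ℝ)

lemma sum_anova (u : Finset (Fin d)) (x : Fin d → ℝ) :
    PvF μ f u x = ∑ v ∈ u.powerset, anova μ f v x := by
  have h : anova μ f u x = PvF μ f u x -
      ∑ v ∈ (u.powerset.erase u).attach, anova μ f v.1 x := by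
    rw [anova]
    rfl
  rw [Finset.sum_attach (u.powerset.erase u) (fun v => anova μ f v x)] at h
  have h2 : anova μ f u x + ∑ v ∈ u.powerset.erase u, anova μ f v x
      = ∑ v ∈ u.powerset, anova μ f v x :=
    Finset.add_sum_erase u.powerset (fun v => anova μ f v x) (Finset.mem_powerset_self u)
  linarith [h, h2]

lemma moebius (u : Finset (Fin d)) (x : Fin d → ℝ) :
    anova μ f u x = ∑ v ∈ u.powerset, (-1 : ℝ) ^ ((u \ v).card) * PvF μ f v x := by
  induction u using Finset.strongInduction with
  | _ u ih =>
    have h : anova μ f u x = PvF μ f u x - ∑ v ∈ u.powerset.erase u, anova μ f v x := by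
      have h0 : anova μ f u x = PvF μ f u x -
          ∑ v ∈ (u.powerset.erase u).attach, anova μ f v.1 x := by rw [anova]; rfl
      rwa [Finset.sum_attach (u.powerset.erase u) (fun v => anova μ f v x)] at h0
    -- rewrite each anova v (v ⊊ u) via ih
    have hrw : ∑ v ∈ u.powerset.erase u, anova μ f v x
        = ∑ v ∈ u.powerset.erase u, ∑ t ∈ v.powerset, (-1 : ℝ) ^ ((v \ t).card) * PvF μ f t x := by
      refine Finset.sum_congr rfl fun v hv => ?_
      exact ih v (Finset.ssubset_iff_subset_ne.mpr
        ⟨Finset.mem_powerset.mp (Finset.mem_of_mem_erase hv), Finset.ne_of_mem_erase hv⟩)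
    -- The key: total double sum over all v ⊆ u equals PvF u x
    have hT : ∑ v ∈ u.powerset, ∑ t ∈ v.powerset, (-1 : ℝ) ^ ((v \ t).card) * PvF μ f t x
        = PvF μ f u x := by
      rw [Finset.sum_comm' (t' := u.powerset) (s' := fun t => u.powerset.filter fun v => t ⊆ v)
        (by
          intro v t
          simp only [Finset.mem_powerset, Finset.mem_filter]
          constructor
          · rintro ⟨h1, h2⟩; exact ⟨⟨h1, h2⟩, h2.trans h1⟩
          · rintro ⟨⟨h1, h2⟩, h3⟩; exact ⟨h1, h2⟩)]
      have hinner : ∀ t ∈ u.powerset,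
          ∑ v ∈ u.powerset.filter (fun v => t ⊆ v), (-1 : ℝ) ^ ((v \ t).card)
            = if u \ t = ∅ then 1 else 0 := by
        intro t ht
        rw [Finset.mem_powerset] at ht
        have hbij : ∑ v ∈ u.powerset.filter (fun v => t ⊆ v), (-1 : ℝ) ^ ((v \ t).card)
            = ∑ s ∈ (u \ t).powerset, (-1 : ℝ) ^ s.card := by
          refine Finset.sum_nbij' (fun v => v \ t) (fun s => s ∪ t) ?_ ?_ ?_ ?_ ?_
          · intro v hv
            simp only [Finset.mem_filter, Finset.mem_powerset] at hv ⊢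
            exact Finset.sdiff_subset_sdiff hv.1 le_rfl
          · intro s hs
            simp only [Finset.mem_filter, Finset.mem_powerset] at hs ⊢
            constructor
            · exact Finset.union_subset (hs.trans Finset.sdiff_subset) ht
            · exact Finset.subset_union_right
          · intro v hv
            simp only [Finset.mem_filter, Finset.mem_powerset] at hv
            exact Finset.sdiff_union_of_subset hv.2
          · intro s hs
            simp only [Finset.mem_powerset] at hs
            have hdisj : Disjoint s t := Finset.disjoint_of_subset_left hs Finset.sdiff_disjoint
            exact Finset.union_sdiff_cancel_right hdisj
          · intro v hv; rfl
        rw [hbij]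
        have := Finset.sum_powerset_neg_one_pow_card (x := u \ t)
        have hcast := congrArg (fun z : ℤ => (z : ℝ)) this
        push_cast at hcast
        simpa using hcast
      calc ∑ t ∈ u.powerset, ∑ v ∈ u.powerset.filter (fun v => t ⊆ v),
              (-1 : ℝ) ^ ((v \ t).card) * PvF μ f t x
          = ∑ t ∈ u.powerset, (if u \ t = ∅ then 1 else 0) * PvF μ f t x := by
            refine Finset.sum_congr rfl fun t ht => ?_
            rw [← Finset.sum_mul, hinner t ht]
        _ = PvF μ f u x := by
            rw [Finset.sum_eq_single u]
            · simp
            · intro t ht htne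
              rw [Finset.mem_powerset] at ht
              have : u \ t ≠ ∅ := by
                intro he
                exact htne (le_antisymm ht (Finset.sdiff_eq_empty_iff_subset.mp he))
              simp [this]
            · intro h
              exact absurd (Finset.mem_powerset_self u) h
    -- combine
    have hsplit : ∑ v ∈ u.powerset, ∑ t ∈ v.powerset, (-1 : ℝ) ^ ((v \ t).card) * PvF μ f t x
        = (∑ t ∈ u.powerset, (-1 : ℝ) ^ ((u \ t).card) * PvF μ f t x)
          + ∑ v ∈ u.powerset.erase u, ∑ t ∈ v.powerset, (-1 : ℝ) ^ ((v \ t).card) * PvF μ f t x :=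
      (Finset.add_sum_erase u.powerset
        (fun v => ∑ t ∈ v.powerset, (-1 : ℝ) ^ ((v \ t).card) * PvF μ f t x)
        (Finset.mem_powerset_self u)).symm
    rw [h, hrw]
    have := hT
    rw [hsplit] at this
    linarith [this]

end PFAux4

set_option linter.unusedSectionVars false

namespace PFAux5
open PFAux PFAux2 PFAux3

variable {d : ℕ} (μ : Fin d → Measure ℝ) [∀ i, IsProbabilityMeasure (μ i)]

/-- Three copies of the index set. -/
abbrev I3 (d : ℕ) := (Fin d) ⊕ ((Fin d) ⊕ (Fin d))

/-- The coordinate measures on the tripled index set. -/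
noncomputable def fam : I3 d → Measure ℝ := Sum.elim μ (Sum.elim μ μ)

instance fam_prob : ∀ q, IsProbabilityMeasure (fam μ q) := by
  rintro (i | i | i) <;> simp only [fam, Sum.elim_inl, Sum.elim_inr] <;> infer_instance

/-- The per-coordinate slot permutation used to reduce `(v, w)` to `(v ∩ w, v ∩ w)`. -/
def Gmap (v w : Finset (Fin d)) : I3 d → I3 d
  | .inl i =>
      if i ∈ v ∧ i ∉ w then .inr (.inl i) else if i ∈ w ∧ i ∉ v then .inr (.inr i) else .inl i
  | .inr (.inl i) => if i ∈ v ∧ i ∉ w then .inl i else .inr (.inl i)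
  | .inr (.inr i) => if i ∈ w ∧ i ∉ v then .inl i else .inr (.inr i)

variable (v w : Finset (Fin d))

lemma Gmap_invol : Function.Involutive (Gmap v w) := by
  rintro (i | i | i) <;> by_cases h1 : i ∈ v <;> by_cases h2 : i ∈ w <;>
    simp [Gmap, h1, h2]

lemma fam_Gmap (q : I3 d) : fam μ (Gmap v w q) = fam μ q := by
  rcases q with i | i | i <;> by_cases h1 : i ∈ v <;> by_cases h2 : i ∈ w <;>
    simp [Gmap, fam, h1, h2]

lemma comp_mp : MeasurePreserving (fun X : (I3 d → ℝ) => X ∘ Gmap v w)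
    (Measure.pi (fam μ)) (Measure.pi (fam μ)) := by
  have hmeas : Measurable (fun X : (I3 d → ℝ) => X ∘ Gmap v w) :=
    measurable_pi_lambda _ fun q => measurable_pi_apply _
  refine ⟨hmeas, ?_⟩
  refine (Measure.pi_eq fun s hs => ?_).symm
  rw [Measure.map_apply hmeas (MeasurableSet.univ_pi hs)]
  have hpre : (fun X : (I3 d → ℝ) => X ∘ Gmap v w) ⁻¹' (Set.univ.pi s)
      = Set.univ.pi (fun q => s (Gmap v w q)) := by
    ext X
    simp only [Set.mem_preimage, Set.mem_pi, Set.mem_univ, forall_true_left, Function.comp]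
    constructor
    · intro h q
      have := h (Gmap v w q)
      rwa [Gmap_invol v w q] at this
    · intro h q
      have := h (Gmap v w q)
      rwa [Gmap_invol v w q] at this
  rw [hpre, Measure.pi_pi]
  have : ∀ q, fam μ q (s (Gmap v w q)) = fam μ (Gmap v w q) (s (Gmap v w q)) := by
    intro q; rw [fam_Gmap]
  simp_rw [this]
  exact Equiv.prod_comp ((Gmap_invol v w).toPerm _) (fun q => fam μ q (s q))

/-- The flattening map from the tripled-index product space to the triple product. -/
def Lam : (I3 d → ℝ) → ((Fin d → ℝ) × ((Fin d → ℝ) × (Fin d → ℝ))) :=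
  fun X => (fun i => X (.inl i), (fun i => X (.inr (.inl i)), fun i => X (.inr (.inr i))))

lemma Lam_mp : MeasurePreserving (Lam (d := d)) (Measure.pi (fam μ))
    ((Measure.pi μ).prod ((Measure.pi μ).prod (Measure.pi μ))) := by
  have h1 := measurePreserving_sumPiEquivProdPi (X := fun _ : I3 d => ℝ) (fam μ)
  haveI : ∀ i : (Fin d) ⊕ (Fin d), IsProbabilityMeasure (Sum.elim μ μ i) := by
    rintro (i | i) <;> simp only [Sum.elim_inl, Sum.elim_inr] <;> infer_instance
  have h2 := measurePreserving_sumPiEquivProdPi (X := fun _ : (Fin d) ⊕ (Fin d) => ℝ)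
      (Sum.elim μ μ)
  have hpair := (MeasurePreserving.id (Measure.pi μ)).prod h2
  have hcomp := hpair.comp h1
  have heq : (Prod.map id ⇑(MeasurableEquiv.sumPiEquivProdPi (fun _ : (Fin d) ⊕ (Fin d) => ℝ)))
      ∘ ⇑(MeasurableEquiv.sumPiEquivProdPi (fun _ : I3 d => ℝ)) = Lam (d := d) := rfl
  rw [heq] at hcomp
  exact hcomp

lemma lam_psi_fst (X : I3 d → ℝ) :
    Kmix v ((Lam (X ∘ Gmap v w)).1, (Lam (X ∘ Gmap v w)).2.1)
      = Kmix (v ∩ w) ((Lam X).1, (Lam X).2.1) := by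
  funext i
  by_cases h1 : i ∈ v <;> by_cases h2 : i ∈ w <;>
    simp [Kmix, Lam, Gmap, Function.comp, h1, h2]

lemma lam_psi_snd (X : I3 d → ℝ) :
    Kmix w ((Lam (X ∘ Gmap v w)).1, (Lam (X ∘ Gmap v w)).2.2)
      = Kmix (v ∩ w) ((Lam X).1, (Lam X).2.2) := by
  funext i
  by_cases h1 : i ∈ v <;> by_cases h2 : i ∈ w <;>
    simp [Kmix, Lam, Gmap, Function.comp, h1, h2]

variable {f : (Fin d → ℝ) → ℝ}

lemma memLp_F2_left (hf : MemLp f 2 (Measure.pi μ)) :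
    MemLp (fun p : (Fin d → ℝ) × ((Fin d → ℝ) × (Fin d → ℝ)) => f (Kmix v (p.1, p.2.1))) 2
      ((Measure.pi μ).prod ((Measure.pi μ).prod (Measure.pi μ))) := by
  have hm1 : MeasurePreserving (Prod.map (id : (Fin d → ℝ) → _) Prod.fst)
      ((Measure.pi μ).prod ((Measure.pi μ).prod (Measure.pi μ)))
      ((Measure.pi μ).prod (Measure.pi μ)) :=
    (MeasurePreserving.id _).prod (mp_fst _ _)
  exact mp_comp_memLp ((Kmix_mp μ v).comp hm1) hf

lemma memLp_F2_right (hf : MemLp f 2 (Measure.pi μ)) :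
    MemLp (fun p : (Fin d → ℝ) × ((Fin d → ℝ) × (Fin d → ℝ)) => f (Kmix w (p.1, p.2.2))) 2
      ((Measure.pi μ).prod ((Measure.pi μ).prod (Measure.pi μ))) := by
  have hm1 : MeasurePreserving (Prod.map (id : (Fin d → ℝ) → _) Prod.snd)
      ((Measure.pi μ).prod ((Measure.pi μ).prod (Measure.pi μ)))
      ((Measure.pi μ).prod (Measure.pi μ)) :=
    (MeasurePreserving.id _).prod (mp_snd _ _)
  exact mp_comp_memLp ((Kmix_mp μ w).comp hm1) hf

lemma stepA (hf : MemLp f 2 (Measure.pi μ)) :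
    ∫ x, PvF μ f v x * PvF μ f w x ∂Measure.pi μ
      = ∫ p, f (Kmix v (p.1, p.2.1)) * f (Kmix w (p.1, p.2.2))
          ∂((Measure.pi μ).prod ((Measure.pi μ).prod (Measure.pi μ))) := by
  have hint : Integrable
      (fun p : (Fin d → ℝ) × ((Fin d → ℝ) × (Fin d → ℝ)) =>
        f (Kmix v (p.1, p.2.1)) * f (Kmix w (p.1, p.2.2)))
      ((Measure.pi μ).prod ((Measure.pi μ).prod (Measure.pi μ))) :=
    L2mul (memLp_F2_left μ v hf) (memLp_F2_right μ w hf)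
  calc ∫ x, PvF μ f v x * PvF μ f w x ∂Measure.pi μ
      = ∫ x, ∫ q, f (Kmix v (x, q.1)) * f (Kmix w (x, q.2))
          ∂((Measure.pi μ).prod (Measure.pi μ)) ∂Measure.pi μ := by
        refine integral_congr_ae (Filter.Eventually.of_forall fun x => ?_)
        exact (integral_prod_mul (fun y => f (Kmix v (x, y))) (fun z => f (Kmix w (x, z)))).symm
    _ = ∫ p, f (Kmix v (p.1, p.2.1)) * f (Kmix w (p.1, p.2.2))
          ∂((Measure.pi μ).prod ((Measure.pi μ).prod (Measure.pi μ))) :=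
        integral_integral hint

lemma factC (hf : MemLp f 2 (Measure.pi μ)) :
    ∫ x, PvF μ f v x * PvF μ f w x ∂Measure.pi μ
      = ∫ x, PvF μ f (v ∩ w) x * PvF μ f (v ∩ w) x ∂Measure.pi μ := by
  have hAESM : AEStronglyMeasurable
      (fun p : (Fin d → ℝ) × ((Fin d → ℝ) × (Fin d → ℝ)) =>
        f (Kmix v (p.1, p.2.1)) * f (Kmix w (p.1, p.2.2)))
      ((Measure.pi μ).prod ((Measure.pi μ).prod (Measure.pi μ))) :=
    ((memLp_F2_left μ v hf).aestronglyMeasurable.mul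
      (memLp_F2_right μ w hf).aestronglyMeasurable)
  have hAESM' : AEStronglyMeasurable
      (fun p : (Fin d → ℝ) × ((Fin d → ℝ) × (Fin d → ℝ)) =>
        f (Kmix (v ∩ w) (p.1, p.2.1)) * f (Kmix (v ∩ w) (p.1, p.2.2)))
      ((Measure.pi μ).prod ((Measure.pi μ).prod (Measure.pi μ))) :=
    ((memLp_F2_left μ (v ∩ w) hf).aestronglyMeasurable.mul
      (memLp_F2_right μ (v ∩ w) hf).aestronglyMeasurable)
  rw [stepA μ v w hf, stepA μ (v ∩ w) (v ∩ w) hf]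
  rw [← mp_integral (Lam_mp μ) hAESM, ← mp_integral (Lam_mp μ) hAESM']
  have hstep : ∫ X, f (Kmix (v ∩ w) ((Lam X).1, (Lam X).2.1))
        * f (Kmix (v ∩ w) ((Lam X).1, (Lam X).2.2)) ∂Measure.pi (fam μ)
      = ∫ X, f (Kmix v ((Lam (X ∘ Gmap v w)).1, (Lam (X ∘ Gmap v w)).2.1))
        * f (Kmix w ((Lam (X ∘ Gmap v w)).1, (Lam (X ∘ Gmap v w)).2.2)) ∂Measure.pi (fam μ) := by
    refine integral_congr_ae (Filter.Eventually.of_forall fun X => ?_)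
    beta_reduce
    rw [lam_psi_fst, lam_psi_snd]
  rw [hstep]
  have hcomp : AEStronglyMeasurable
      (fun X : I3 d → ℝ => f (Kmix v ((Lam X).1, (Lam X).2.1))
        * f (Kmix w ((Lam X).1, (Lam X).2.2))) (Measure.pi (fam μ)) :=
    hAESM.comp_quasiMeasurePreserving (Lam_mp μ).quasiMeasurePreserving
  exact (mp_integral (comp_mp μ v w) hcomp).symm

end PFAux5

namespace PFAux6
open PFAux PFAux2 PFAux3 PFAux4 PFAux5

variable {d : ℕ} (μ : Fin d → Measure ℝ) [∀ i, IsProbabilityMeasure (μ i)]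
variable {f : (Fin d → ℝ) → ℝ}

lemma anova_memLp (hf : MemLp f 2 (Measure.pi μ)) (u : Finset (Fin d)) :
    MemLp (anova μ f u) 2 (Measure.pi μ) := by
  have h : anova μ f u = fun x => ∑ v ∈ u.powerset, (-1 : ℝ) ^ ((u \ v).card) * PvF μ f v x :=
    funext (moebius μ f u)
  rw [h]
  exact memLp_finset_sum _ fun v _ => (Pv_memLp μ hf v).const_mul _

lemma integral_anova_mul (hf : MemLp f 2 (Measure.pi μ)) (u u' : Finset (Fin d)) :
    ∫ x, anova μ f u x * anova μ f u' x ∂Measure.pi μ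
      = ∑ v ∈ u.powerset, ∑ v' ∈ u'.powerset,
          ((-1 : ℝ) ^ ((u \ v).card) * (-1 : ℝ) ^ ((u' \ v').card))
            * ∫ x, PvF μ f v x * PvF μ f v' x ∂Measure.pi μ := by
  have h1 : ∀ x, anova μ f u x * anova μ f u' x
      = ∑ v ∈ u.powerset, ∑ v' ∈ u'.powerset,
          ((-1 : ℝ) ^ ((u \ v).card) * (-1 : ℝ) ^ ((u' \ v').card))
            * (PvF μ f v x * PvF μ f v' x) := by
    intro x
    rw [moebius μ f u x, moebius μ f u' x, Finset.sum_mul_sum]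
    refine Finset.sum_congr rfl fun v _ => Finset.sum_congr rfl fun v' _ => by ring
  rw [integral_congr_ae (Filter.Eventually.of_forall h1)]
  rw [integral_finset_sum _ fun v _ => integrable_finset_sum _ fun v' _ =>
    ((L2mul (Pv_memLp μ hf v) (Pv_memLp μ hf v')).const_mul _)]
  refine Finset.sum_congr rfl fun v _ => ?_
  rw [integral_finset_sum _ fun v' _ =>
    ((L2mul (Pv_memLp μ hf v) (Pv_memLp μ hf v')).const_mul _)]
  exact Finset.sum_congr rfl fun v' _ => integral_const_mul _ _

lemma ortho_aux (hf : MemLp f 2 (Measure.pi μ)) (u u' : Finset (Fin d))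
    (hex : ∃ i, i ∈ u ∧ i ∉ u') :
    ∫ x, anova μ f u x * anova μ f u' x ∂Measure.pi μ = 0 := by
  obtain ⟨i, hiu, hiu'⟩ := hex
  rw [integral_anova_mul μ hf u u']
  have hfc : ∀ v v', ∫ x, PvF μ f v x * PvF μ f v' x ∂Measure.pi μ
      = ∫ x, PvF μ f (v ∩ v') x * PvF μ f (v ∩ v') x ∂Measure.pi μ := fun v v' =>
    factC μ v v' hf
  set u₀ := u.erase i with hu₀
  have hinot : i ∉ u₀ := Finset.notMem_erase i u
  have hins : u = insert i u₀ := (Finset.insert_erase hiu).symm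
  rw [hins, Finset.sum_powerset_insert hinot, ← Finset.sum_add_distrib]
  refine Finset.sum_eq_zero fun v hv => ?_
  rw [← Finset.sum_add_distrib]
  refine Finset.sum_eq_zero fun v' hv' => ?_
  have hiv : i ∉ v := fun hi => hinot (Finset.mem_powerset.mp hv hi)
  have hiv' : i ∉ v' := fun hi => hiu' (Finset.mem_powerset.mp hv' hi)
  have hinter : (insert i v) ∩ v' = v ∩ v' := by
    rw [Finset.insert_inter_of_notMem hiv']
  have hcard : (insert i u₀ \ v).card = (insert i u₀ \ insert i v).card + 1 := by
    have h1 : insert i u₀ \ insert i v = (insert i u₀ \ v).erase i := by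
      rw [Finset.sdiff_insert]
    have h2 : i ∈ insert i u₀ \ v := Finset.mem_sdiff.mpr ⟨Finset.mem_insert_self i u₀, hiv⟩
    rw [h1, Finset.card_erase_of_mem h2]
    have : 0 < (insert i u₀ \ v).card := Finset.card_pos.mpr ⟨i, h2⟩
    omega
  rw [hfc v v', hfc (insert i v) v', hinter]
  have hexp : (insert i u₀ \ v).card + 0 = ((insert i u₀ \ insert i v).card) + 1 := by omega
  rw [hcard, pow_succ]
  ring

lemma ortho (hf : MemLp f 2 (Measure.pi μ)) {u u' : Finset (Fin d)} (h : u ≠ u') :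
    ∫ x, anova μ f u x * anova μ f u' x ∂Measure.pi μ = 0 := by
  by_cases hsub : u ⊆ u'
  · have : ∃ i, i ∈ u' ∧ i ∉ u := by
      by_contra hc
      push_neg at hc
      exact h (le_antisymm hsub hc)
    rw [integral_congr_ae (Filter.Eventually.of_forall
      (fun x => mul_comm (anova μ f u x) (anova μ f u' x)))]
    exact ortho_aux μ hf u' u this
  · have : ∃ i, i ∈ u ∧ i ∉ u' := by
      by_contra hc
      push_neg at hc
      exact hsub hc
    exact ortho_aux μ hf u u' this

lemma lemS (hf : MemLp f 2 (Measure.pi μ)) (A : Finset (Fin d)) :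
    ∫ x, PvF μ f A x * PvF μ f A x ∂Measure.pi μ = ∑ w ∈ A.powerset, sigmaSq μ f w := by
  have h1 : ∀ x, PvF μ f A x * PvF μ f A x
      = ∑ w ∈ A.powerset, ∑ w' ∈ A.powerset, anova μ f w x * anova μ f w' x := by
    intro x
    rw [sum_anova μ f A x, Finset.sum_mul_sum]
  rw [integral_congr_ae (Filter.Eventually.of_forall h1)]
  rw [integral_finset_sum _ fun w _ => integrable_finset_sum _ fun w' _ =>
    (L2mul (anova_memLp μ hf w) (anova_memLp μ hf w'))]
  refine Finset.sum_congr rfl fun w hw => ?_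
  rw [integral_finset_sum _ fun w' _ => (L2mul (anova_memLp μ hf w) (anova_memLp μ hf w'))]
  rw [Finset.sum_eq_single w]
  · simp only [sigmaSq, sq]
  · intro w' _ hne
    exact ortho μ hf (Ne.symm hne)
  · intro hnw
    exact absurd hw hnw

end PFAux6

namespace PFAux7
open PFAux PFAux2 PFAux3 PFAux4 PFAux5 PFAux6

variable {d : ℕ} (μ : Fin d → Measure ℝ) [∀ i, IsProbabilityMeasure (μ i)]
variable {f : (Fin d → ℝ) → ℝ}

lemma mix_compl (s : Finset (Fin d)) (x y : Fin d → ℝ) :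
    (fun i => if i ∈ s then y i else x i) = Kmix sᶜ (x, y) := by
  funext i
  by_cases h : i ∈ s <;> simp [Kmix, h, Finset.mem_compl]

lemma memLp_fst (hf : MemLp f 2 (Measure.pi μ)) :
    MemLp (fun z : (Fin d → ℝ) × (Fin d → ℝ) => f z.1) 2
      ((Measure.pi μ).prod (Measure.pi μ)) :=
  mp_comp_memLp (mp_fst _ _) hf

lemma memLp_Kmix (hf : MemLp f 2 (Measure.pi μ)) (v : Finset (Fin d)) :
    MemLp (fun z : (Fin d → ℝ) × (Fin d → ℝ) => f (Kmix v z)) 2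
      ((Measure.pi μ).prod (Measure.pi μ)) :=
  mp_comp_memLp (Kmix_mp μ v) hf

/-- The key computation: `∫∫ f(x) f(y_s, x_{-s}) = ∫ (P_{sᶜ} f)²`. -/
lemma D_eq (hf : MemLp f 2 (Measure.pi μ)) (s : Finset (Fin d)) :
    ∫ z, f z.1 * f (Kmix sᶜ z) ∂((Measure.pi μ).prod (Measure.pi μ))
      = ∫ x, PvF μ f sᶜ x * PvF μ f sᶜ x ∂Measure.pi μ := by
  have hAC : Integrable (fun z : (Fin d → ℝ) × (Fin d → ℝ) => f z.1 * f (Kmix sᶜ z))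
      ((Measure.pi μ).prod (Measure.pi μ)) :=
    L2mul (memLp_fst μ hf) (memLp_Kmix μ hf sᶜ)
  have h1 : ∫ z, f z.1 * f (Kmix sᶜ z) ∂((Measure.pi μ).prod (Measure.pi μ))
      = ∫ x, ∫ y, f x * f (Kmix sᶜ (x, y)) ∂Measure.pi μ ∂Measure.pi μ :=
    (integral_integral (f := fun x y => f x * f (Kmix sᶜ (x, y))) hAC).symm
  rw [h1]
  have h2 : ∀ x, ∫ y, f x * f (Kmix sᶜ (x, y)) ∂Measure.pi μ = f x * PvF μ f sᶜ x := by
    intro x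
    exact integral_const_mul _ _
  rw [integral_congr_ae (Filter.Eventually.of_forall h2)]
  have h3 : ∀ x, f x * PvF μ f sᶜ x = PvF μ f Finset.univ x * PvF μ f sᶜ x := by
    intro x
    rw [Pv_univ]
  rw [integral_congr_ae (Filter.Eventually.of_forall h3), factC μ Finset.univ sᶜ hf,
    Finset.univ_inter]

lemma gPF_integral (hf : MemLp f 2 (Measure.pi μ)) (j : Fin d) (u : Finset (Fin d)) :
    ∫ x, ∫ y, gPF f j u x y ∂Measure.pi μ ∂Measure.pi μ
      = (∫ x, PvF μ f uᶜ x * PvF μ f uᶜ x ∂Measure.pi μ)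
        - ∫ x, PvF μ f (insert j u)ᶜ x * PvF μ f (insert j u)ᶜ x ∂Measure.pi μ := by
  set ν := (Measure.pi μ).prod (Measure.pi μ) with hν
  have hA := memLp_fst μ hf
  have hB := memLp_Kmix μ hf (insert j u)ᶜ
  have hC := memLp_Kmix μ hf uᶜ
  have hAB := L2mul hA hB
  have hAC := L2mul hA hC
  have hBB := L2mul hB hB
  have hCC := L2mul hC hC
  have hgPF : ∀ z : (Fin d → ℝ) × (Fin d → ℝ), gPF f j u z.1 z.2
      = (f z.1 * f (Kmix uᶜ z) - f z.1 * f (Kmix (insert j u)ᶜ z))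
        + ((1 : ℝ)/2) * (f (Kmix (insert j u)ᶜ z) * f (Kmix (insert j u)ᶜ z))
        - ((1 : ℝ)/2) * (f (Kmix uᶜ z) * f (Kmix uᶜ z)) := by
    intro z
    rw [gPF, mix_compl (insert j u) z.1 z.2, mix_compl u z.1 z.2]
    ring
  have hGint : Integrable (fun z : (Fin d → ℝ) × (Fin d → ℝ) => gPF f j u z.1 z.2) ν := by
    have : Integrable (fun z : (Fin d → ℝ) × (Fin d → ℝ) =>
        (f z.1 * f (Kmix uᶜ z) - f z.1 * f (Kmix (insert j u)ᶜ z))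
        + ((1 : ℝ)/2) * (f (Kmix (insert j u)ᶜ z) * f (Kmix (insert j u)ᶜ z))
        - ((1 : ℝ)/2) * (f (Kmix uᶜ z) * f (Kmix uᶜ z))) ν :=
      (((hAC.sub hAB).add (hBB.const_mul _)).sub (hCC.const_mul _))
    exact this.congr (Filter.Eventually.of_forall fun z => (hgPF z).symm)
  rw [integral_integral hGint]
  rw [integral_congr_ae (Filter.Eventually.of_forall hgPF)]
  have i1 : Integrable (fun z : (Fin d → ℝ) × (Fin d → ℝ) =>
      f z.1 * f (Kmix uᶜ z) - f z.1 * f (Kmix (insert j u)ᶜ z)) ν := hAC.sub hAB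
  have i2 : Integrable (fun z : (Fin d → ℝ) × (Fin d → ℝ) =>
      f z.1 * f (Kmix uᶜ z) - f z.1 * f (Kmix (insert j u)ᶜ z)
        + (1 : ℝ)/2 * (f (Kmix (insert j u)ᶜ z) * f (Kmix (insert j u)ᶜ z))) ν :=
    i1.add (hBB.const_mul _)
  have i4 : Integrable (fun z : (Fin d → ℝ) × (Fin d → ℝ) =>
      (1 : ℝ)/2 * (f (Kmix uᶜ z) * f (Kmix uᶜ z))) ν := hCC.const_mul _
  have i5 : Integrable (fun z : (Fin d → ℝ) × (Fin d → ℝ) =>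
      (1 : ℝ)/2 * (f (Kmix (insert j u)ᶜ z) * f (Kmix (insert j u)ᶜ z))) ν := hBB.const_mul _
  rw [integral_sub i2 i4, integral_add i1 i5, integral_sub hAC hAB,
    integral_const_mul, integral_const_mul]
  have hff : AEStronglyMeasurable (fun x => f x * f x) (Measure.pi μ) :=
    hf.aestronglyMeasurable.mul hf.aestronglyMeasurable
  have hB2 : ∫ z, f (Kmix (insert j u)ᶜ z) * f (Kmix (insert j u)ᶜ z) ∂ν
      = ∫ x, f x * f x ∂Measure.pi μ := mp_integral (Kmix_mp μ _) hff
  have hC2 : ∫ z, f (Kmix uᶜ z) * f (Kmix uᶜ z) ∂ν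
      = ∫ x, f x * f x ∂Measure.pi μ := mp_integral (Kmix_mp μ _) hff
  rw [hB2, hC2, D_eq μ hf u, D_eq μ hf (insert j u)]
  ring

end PFAux7

namespace PFAux8
open PFAux PFAux2 PFAux3 PFAux4 PFAux5 PFAux6 PFAux7

variable {d : ℕ} (μ : Fin d → Measure ℝ) [∀ i, IsProbabilityMeasure (μ i)]
variable (f : (Fin d → ℝ) → ℝ)

lemma tE_repr (s : Finset (Fin d)) :
    totalEffect μ f s
      = (∑ w ∈ (Finset.univ : Finset (Fin d)).powerset, sigmaSq μ f w)
        - ∑ w ∈ sᶜ.powerset, sigmaSq μ f w := by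
  rw [totalEffect]
  have hsplit := Finset.sum_filter_add_sum_filter_not
    ((Finset.univ : Finset (Fin d)).powerset) (fun v => (v ∩ s).Nonempty) (sigmaSq μ f)
  have hfe : ((Finset.univ : Finset (Fin d)).powerset.filter fun v => ¬(v ∩ s).Nonempty)
      = sᶜ.powerset := by
    ext v
    simp only [Finset.mem_filter, Finset.mem_powerset, Finset.not_nonempty_iff_eq_empty,
      ← Finset.disjoint_iff_inter_eq_empty]
    constructor
    · rintro ⟨-, hd⟩
      intro a ha
      simp only [Finset.mem_compl]
      exact fun has => (Finset.disjoint_left.mp hd) ha has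
    · intro hsub
      refine ⟨Finset.subset_univ v, Finset.disjoint_left.mpr fun a ha has => ?_⟩
      exact (Finset.mem_compl.mp (hsub ha)) has
  rw [hfe] at hsplit
  linarith [hsplit]

theorem main (hf : MemLp f 2 (Measure.pi μ)) (j : Fin d) :
    shapley μ f j =
      (1 / (d : ℝ)) * ∑ ℓ ∈ Finset.range d, ((d - 1).choose ℓ : ℝ)⁻¹ *
        ∑ u ∈ (Finset.univ.erase j).powerset.filter (fun u => u.card = ℓ),
          ∫ x, ∫ y, gPF f j u x y ∂Measure.pi μ ∂Measure.pi μ := by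
  have hper : ∀ u ∈ (Finset.univ.erase j).powerset,
      totalEffect μ f (insert j u) - totalEffect μ f u
        = ∫ x, ∫ y, gPF f j u x y ∂Measure.pi μ ∂Measure.pi μ := by
    intro u _
    rw [tE_repr, tE_repr, gPF_integral μ hf j u, lemS μ hf uᶜ, lemS μ hf (insert j u)ᶜ]
    ring
  rw [shapley]
  congr 1
  have hmaps : ∀ u ∈ (Finset.univ.erase j).powerset, u.card ∈ Finset.range d := by
    intro u hu
    rw [Finset.mem_powerset] at hu
    have h1 : u.card ≤ (Finset.univ.erase j).card := Finset.card_le_card hu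
    rw [Finset.card_erase_of_mem (Finset.mem_univ j), Finset.card_univ, Fintype.card_fin] at h1
    have hd : 0 < d := j.pos
    rw [Finset.mem_range]
    omega
  rw [← Finset.sum_fiberwise_of_maps_to hmaps
    (fun u => ((d - 1).choose u.card : ℝ)⁻¹ *
      (totalEffect μ f (insert j u) - totalEffect μ f u))]
  refine Finset.sum_congr rfl fun ℓ _ => ?_
  rw [Finset.mul_sum]
  refine Finset.sum_congr rfl fun u hu => ?_
  rw [Finset.mem_filter] at hu
  rw [hu.2, hper u hu.1]

end PFAux8

/-- Averaged pick-freeze representation of the Shapley effect: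
`φ_j = (1/d) ∑_{ℓ=0}^{d-1} C(d-1,ℓ)⁻¹ ∑_{u ⊆ [1:d]∖{j}, |u|=ℓ} ∫∫ g_u(x,y) ρ(x) ρ(y) dx dy`,
i.e. `φ_j` is the expectation of `g_{U_j(ℓ)}(x,y)` for `ℓ` uniform on `{0,…,d-1}`,
`U_j(ℓ)` a uniform subset of `[1:d]∖{j}` of cardinality `ℓ`, and `x, y ∼ ρ` independent. -/
theorem shapley_eq_expectation_gPF {d : ℕ} (μ : Fin d → Measure ℝ)
    [∀ i, IsProbabilityMeasure (μ i)] (f : (Fin d → ℝ) → ℝ)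
    (hf : MemLp f 2 (Measure.pi μ)) (j : Fin d) :
    shapley μ f j =
      (1 / (d : ℝ)) * ∑ ℓ ∈ Finset.range d, ((d - 1).choose ℓ : ℝ)⁻¹ *
        ∑ u ∈ (Finset.univ.erase j).powerset.filter (fun u => u.card = ℓ),
          ∫ x, ∫ y, gPF f j u x y ∂Measure.pi μ ∂Measure.pi μ :=
  PFAux8.main μ f hf j
end

section
/- Assume M_4(f) := ∫_Ω (f(x))⁴ ρ(x) dx < ∞. Then for each j ∈ {1,…,d}, the variance of the single-sample quantity g_{U_j(ℓ)}(x,y), taken with respect to independent x,y ∼ ρ, ℓ uniform on {0,1,…,d−1}, and U_j(ℓ) a uniform subset of {1,…,d}∖{j} of cardinality ℓ, is bounded by 16 M_4(f); in particular it is finite. -/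
open MeasureTheory Finset
open scoped ENNReal

instance {d : ℕ} : MeasurableSpace (Finset (Fin d)) := ⊤

/-- The law of the random subset `U_j(ℓ)`, where `ℓ` is uniform on `{0, 1, …, d-1}` and,
given `ℓ`, `U_j(ℓ)` is a uniformly distributed subset of `[1:d]∖{j}` of cardinality `ℓ`:
each subset `u ⊆ [1:d]∖{j}` receives probability `(1/d) · C(d-1, |u|)⁻¹`. -/
noncomputable def subsetLaw (d : ℕ) (j : Fin d) : Measure (Finset (Fin d)) :=
  ∑ u ∈ (Finset.univ.erase j).powerset,
    (((d : ENNReal) * ((d - 1).choose u.card : ENNReal))⁻¹) • Measure.dirac u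


section Aux

open scoped ENNReal

namespace VarGPF

instance {d : ℕ} : MeasurableSingletonClass (Finset (Fin d)) := ⟨fun _ => trivial⟩

/-- The coordinate-mixing map is measurable. -/
lemma measurable_mix {d : ℕ} (v : Finset (Fin d)) :
    Measurable (fun q : (Fin d → ℝ) × (Fin d → ℝ) => fun i => if i ∈ v then q.2 i else q.1 i) := by
  apply measurable_pi_lambda
  intro i
  by_cases h : i ∈ v
  · simp only [h, ↓reduceIte]; exact (measurable_pi_apply i).comp measurable_snd
  · simp only [h, ↓reduceIte]; exact (measurable_pi_apply i).comp measurable_fst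

/-- The coordinate-mixing map is measure preserving from `ρ ⊗ ρ` to `ρ`. -/
lemma measurePreserving_mix {d : ℕ} (μ : Fin d → Measure ℝ) [∀ i, IsProbabilityMeasure (μ i)]
    (v : Finset (Fin d)) :
    MeasurePreserving
      (fun q : (Fin d → ℝ) × (Fin d → ℝ) => fun i => if i ∈ v then q.2 i else q.1 i)
      ((Measure.pi μ).prod (Measure.pi μ)) (Measure.pi μ) := by
  refine ⟨measurable_mix v, ?_⟩
  refine (Measure.pi_eq fun s hs => ?_).symm
  rw [Measure.map_apply (measurable_mix v) (MeasurableSet.univ_pi hs)]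
  have hpre : (fun q : (Fin d → ℝ) × (Fin d → ℝ) => fun i => if i ∈ v then q.2 i else q.1 i) ⁻¹'
      (Set.pi Set.univ s) =
      (Set.pi Set.univ fun i => if i ∈ v then Set.univ else s i) ×ˢ
        (Set.pi Set.univ fun i => if i ∈ v then s i else Set.univ) := by
    ext q
    simp only [Set.mem_preimage, Set.mem_pi, Set.mem_univ, forall_true_left, Set.mem_prod]
    constructor
    · intro h
      constructor <;> intro i <;> by_cases hi : i ∈ v
      · simp [hi]
      · simpa [hi] using h i
      · simpa [hi] using h i
      · simp [hi]
    · rintro ⟨h1, h2⟩ i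
      by_cases hi : i ∈ v
      · simpa [hi] using h2 i
      · simpa [hi] using h1 i
  rw [hpre, Measure.prod_prod, Measure.pi_pi, Measure.pi_pi, ← Finset.prod_mul_distrib]
  refine Finset.prod_congr rfl fun i _ => ?_
  by_cases hi : i ∈ v <;> simp [hi]

lemma isFiniteMeasure_smul {α : Type*} [MeasurableSpace α] (c : ℝ≥0∞) (hc : c ≠ ∞)
    (ν : Measure α) [IsFiniteMeasure ν] : IsFiniteMeasure (c • ν) := by
  constructor
  rw [Measure.smul_apply, smul_eq_mul]
  exact ENNReal.mul_lt_top hc.lt_top (measure_lt_top _ _)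

lemma prod_smul_right {α β : Type*} [MeasurableSpace α] [MeasurableSpace β] (μ : Measure α)
    (c : ℝ≥0∞) (hc : c ≠ ∞) (ν : Measure β) [SFinite ν] [SFinite (c • ν)] :
    μ.prod (c • ν) = c • μ.prod ν := by
  ext s hs
  rw [Measure.smul_apply, smul_eq_mul, Measure.prod_apply hs, Measure.prod_apply hs,
    ← lintegral_const_mul' c _ hc]
  simp only [Measure.smul_apply, smul_eq_mul]

/-- The total mass of the subset law is `1`. -/
lemma subsetLaw_mass {d : ℕ} (j : Fin d) :
    ∑ u ∈ (Finset.univ.erase j).powerset,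
      (((d : ℝ≥0∞) * ((d - 1).choose u.card : ℝ≥0∞))⁻¹) = 1 := by
  have hd0 : 0 < d := j.pos
  have hdne : (d : ℝ≥0∞) ≠ 0 := Nat.cast_ne_zero.mpr hd0.ne'
  have hcard : (Finset.univ.erase j).card = d - 1 := by
    rw [Finset.card_erase_of_mem (Finset.mem_univ j), Finset.card_univ, Fintype.card_fin]
  rw [Finset.sum_powerset_apply_card
    (fun m => ((d : ℝ≥0∞) * ((d - 1).choose m : ℝ≥0∞))⁻¹), hcard,
    Nat.sub_add_cancel hd0]
  have key : ∀ m ∈ Finset.range d,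
      (d - 1).choose m • ((d : ℝ≥0∞) * ((d - 1).choose m : ℝ≥0∞))⁻¹ = (d : ℝ≥0∞)⁻¹ := by
    intro m hm
    have hmle : m ≤ d - 1 := Nat.le_pred_of_lt (Finset.mem_range.mp hm)
    have hC : (d - 1).choose m ≠ 0 := (Nat.choose_pos hmle).ne'
    have hCne : ((d - 1).choose m : ℝ≥0∞) ≠ 0 := Nat.cast_ne_zero.mpr hC
    rw [nsmul_eq_mul, ENNReal.mul_inv (Or.inr (ENNReal.natCast_ne_top _))
      (Or.inl (ENNReal.natCast_ne_top _)), mul_comm ((d : ℝ≥0∞))⁻¹ _, ← mul_assoc,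
      ENNReal.mul_inv_cancel hCne (ENNReal.natCast_ne_top _), one_mul]
  rw [Finset.sum_congr rfl key, Finset.sum_const, Finset.card_range, nsmul_eq_mul,
    ENNReal.mul_inv_cancel hdne (ENNReal.natCast_ne_top _)]

lemma cWeight_ne_top {d : ℕ} (j : Fin d) (u : Finset (Fin d))
    (hu : u ∈ (Finset.univ.erase j).powerset) :
    (((d : ℝ≥0∞) * ((d - 1).choose u.card : ℝ≥0∞))⁻¹) ≠ ∞ := by
  have hd0 : 0 < d := j.pos
  have hmle : u.card ≤ d - 1 := by
    have := Finset.card_le_card (Finset.mem_powerset.mp hu)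
    rwa [Finset.card_erase_of_mem (Finset.mem_univ j), Finset.card_univ, Fintype.card_fin] at this
  have hC : (d - 1).choose u.card ≠ 0 := (Nat.choose_pos hmle).ne'
  rw [ENNReal.inv_ne_top]
  exact mul_ne_zero (by exact_mod_cast hd0.ne') (Nat.cast_ne_zero.mpr hC)


lemma decomp_aux {d : ℕ} (ν : Measure (Fin d → ℝ)) [IsProbabilityMeasure ν]
    (S : Finset (Finset (Fin d))) (c : Finset (Fin d) → ℝ≥0∞) (hc : ∀ u : S, c u.1 ≠ ∞) :
    ν.prod (ν.prod (∑ u ∈ S, c u • Measure.dirac u)) =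
      ∑ u ∈ S, c u •
        Measure.map (fun q : (Fin d → ℝ) × (Fin d → ℝ) => (q.1, (q.2, u))) (ν.prod ν) := by
  classical
  have step2 : ∀ u : Finset (Fin d),
      ν.prod (Measure.map (fun y => (y, u)) ν) =
        Measure.map (fun q : (Fin d → ℝ) × (Fin d → ℝ) => (q.1, (q.2, u))) (ν.prod ν) := by
    intro u
    have hmid : ν.prod (Measure.map (fun y => (y, u)) ν) =
        (Measure.map id ν).prod (Measure.map (fun y => (y, u)) ν) := by rw [Measure.map_id]
    rw [hmid, Measure.map_prod_map _ _ measurable_id measurable_prodMk_right]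
    rfl
  have step1 : ν.prod (∑ u ∈ S, c u • Measure.dirac u) =
      ∑ u ∈ S, c u • Measure.map (fun y => (y, u)) ν := by
    calc ν.prod (∑ u ∈ S, c u • Measure.dirac u)
        = ν.prod (Measure.sum fun u : S => c u.1 • Measure.dirac u.1) := by
          rw [Measure.sum_coe_finset S (fun u => c u • Measure.dirac u)]
      _ = Measure.sum fun u : S => ν.prod (c u.1 • Measure.dirac u.1) :=
          Measure.prod_sum_right ν (fun u : S => c u.1 • Measure.dirac u.1)
      _ = Measure.sum fun u : S => c u.1 • Measure.map (fun y => (y, u.1)) ν := by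
          congr 1
          funext u
          rw [prod_smul_right ν (c u.1) (hc u) (Measure.dirac u.1), Measure.prod_dirac]
      _ = ∑ u ∈ S, c u • Measure.map (fun y => (y, u)) ν :=
          Measure.sum_coe_finset S (fun u => c u • Measure.map (fun y => (y, u)) ν)
  calc ν.prod (ν.prod (∑ u ∈ S, c u • Measure.dirac u))
      = ν.prod (∑ u ∈ S, c u • Measure.map (fun y => (y, u)) ν) := by rw [step1]
    _ = ν.prod (Measure.sum fun u : S => c u.1 • Measure.map (fun y => (y, u.1)) ν) := by
        rw [Measure.sum_coe_finset S (fun u => c u • Measure.map (fun y => (y, u)) ν)]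
    _ = Measure.sum fun u : S => ν.prod (c u.1 • Measure.map (fun y => (y, u.1)) ν) :=
        Measure.prod_sum_right ν (fun u : S => c u.1 • Measure.map (fun y => (y, u.1)) ν)
    _ = Measure.sum fun u : S =>
          c u.1 • Measure.map (fun q : (Fin d → ℝ) × (Fin d → ℝ) => (q.1, (q.2, u.1)))
            (ν.prod ν) := by
        congr 1
        funext u
        rw [prod_smul_right ν (c u.1) (hc u) (Measure.map (fun y => (y, u.1)) ν), step2 u.1]
    _ = ∑ u ∈ S,
          c u • Measure.map (fun q : (Fin d → ℝ) × (Fin d → ℝ) => (q.1, (q.2, u)))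
            (ν.prod ν) :=
        Measure.sum_coe_finset S (fun u => c u •
          Measure.map (fun q : (Fin d → ℝ) × (Fin d → ℝ) => (q.1, (q.2, u))) (ν.prod ν))

/-- Decomposition of the sampling measure as a finite weighted sum of pushforwards of `ρ ⊗ ρ`. -/
lemma prod_subsetLaw_decomp {d : ℕ} (μ : Fin d → Measure ℝ)
    [∀ i, IsProbabilityMeasure (μ i)] (j : Fin d) :
    (Measure.pi μ).prod ((Measure.pi μ).prod (subsetLaw d j)) =
      ∑ u ∈ (Finset.univ.erase j).powerset,
        (((d : ℝ≥0∞) * ((d - 1).choose u.card : ℝ≥0∞))⁻¹) •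
          Measure.map (fun q : (Fin d → ℝ) × (Fin d → ℝ) => (q.1, (q.2, u)))
            ((Measure.pi μ).prod (Measure.pi μ)) := by
  have h := decomp_aux (Measure.pi μ) (Finset.univ.erase j).powerset
    (fun u => (((d : ℝ≥0∞) * ((d - 1).choose u.card : ℝ≥0∞))⁻¹))
    (fun u => cWeight_ne_top j u.1 u.2)
  exact h


/-- The key pointwise inequality. -/
lemma ofReal_gsq_le (s t w : ℝ) :
    ENNReal.ofReal ((1 / 2 * (s - t) ^ 2 - 1 / 2 * (s - w) ^ 2) ^ 2) ≤
      8 * ENNReal.ofReal (s ^ 4) +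
        (4 * ENNReal.ofReal (t ^ 4) + 4 * ENNReal.ofReal (w ^ 4)) := by
  have h1 : (s - t) ^ 4 ≤ 8 * s ^ 4 + 8 * t ^ 4 := by
    nlinarith [sq_nonneg (s + t), sq_nonneg (s - t), sq_nonneg (s ^ 2 - t ^ 2),
      sq_nonneg (s ^ 2 + t ^ 2), sq_nonneg ((s - t) ^ 2 - 2 * s ^ 2 - 2 * t ^ 2), sq_nonneg (s * t)]
  have h2 : (s - w) ^ 4 ≤ 8 * s ^ 4 + 8 * w ^ 4 := by
    nlinarith [sq_nonneg (s + w), sq_nonneg (s - w), sq_nonneg (s ^ 2 - w ^ 2),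
      sq_nonneg (s ^ 2 + w ^ 2), sq_nonneg ((s - w) ^ 2 - 2 * s ^ 2 - 2 * w ^ 2), sq_nonneg (s * w)]
  have h0 : (1 / 2 * (s - t) ^ 2 - 1 / 2 * (s - w) ^ 2) ^ 2 ≤
      8 * s ^ 4 + (4 * t ^ 4 + 4 * w ^ 4) := by
    nlinarith [h1, h2, sq_nonneg ((s - t) ^ 2 + (s - w) ^ 2)]
  calc ENNReal.ofReal ((1 / 2 * (s - t) ^ 2 - 1 / 2 * (s - w) ^ 2) ^ 2)
      ≤ ENNReal.ofReal (8 * s ^ 4 + (4 * t ^ 4 + 4 * w ^ 4)) := ENNReal.ofReal_le_ofReal h0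
    _ = 8 * ENNReal.ofReal (s ^ 4) +
          (4 * ENNReal.ofReal (t ^ 4) + 4 * ENNReal.ofReal (w ^ 4)) := by
        rw [ENNReal.ofReal_add (by positivity) (by positivity),
          ENNReal.ofReal_add (by positivity) (by positivity),
          ENNReal.ofReal_mul (by norm_num : (0:ℝ) ≤ 8),
          ENNReal.ofReal_mul (by norm_num : (0:ℝ) ≤ 4),
          ENNReal.ofReal_mul (by norm_num : (0:ℝ) ≤ 4)]
        norm_num

/-- The per-subset second moment bound. -/
lemma lintegral_gPF_sq_le {d : ℕ} (μ : Fin d → Measure ℝ)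
    [∀ i, IsProbabilityMeasure (μ i)] (F : (Fin d → ℝ) → ℝ) (hF : Measurable F)
    (j : Fin d) (u : Finset (Fin d)) :
    ∫⁻ q : (Fin d → ℝ) × (Fin d → ℝ), ENNReal.ofReal ((gPF F j u q.1 q.2) ^ 2)
        ∂((Measure.pi μ).prod (Measure.pi μ)) ≤
      16 * ∫⁻ x, ENNReal.ofReal (F x ^ 4) ∂(Measure.pi μ) := by
  set ν := Measure.pi μ with hν
  set h : (Fin d → ℝ) → ℝ≥0∞ := fun z => ENNReal.ofReal (F z ^ 4) with hh
  have hmh : Measurable h := (hF.pow_const 4).ennreal_ofReal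
  have hfstMP : MeasurePreserving Prod.fst (ν.prod ν) ν :=
    ⟨measurable_fst, by simp [Measure.map_fst_prod]⟩
  have hmix1 := measurePreserving_mix μ (insert j u)
  have hmix2 := measurePreserving_mix μ u
  have hI : ∫⁻ q : (Fin d → ℝ) × (Fin d → ℝ), ENNReal.ofReal ((gPF F j u q.1 q.2) ^ 2)
      ∂(ν.prod ν) ≤
      ∫⁻ q : (Fin d → ℝ) × (Fin d → ℝ),
        (8 * h q.1 + (4 * h (fun i => if i ∈ insert j u then q.2 i else q.1 i)
          + 4 * h (fun i => if i ∈ u then q.2 i else q.1 i))) ∂(ν.prod ν) := by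
    refine lintegral_mono fun q => ?_
    exact ofReal_gsq_le (F q.1) (F (fun i => if i ∈ insert j u then q.2 i else q.1 i))
      (F (fun i => if i ∈ u then q.2 i else q.1 i))
  refine hI.trans (le_of_eq ?_)
  have mf : Measurable fun q : (Fin d → ℝ) × (Fin d → ℝ) => h q.1 := hmh.comp measurable_fst
  have m1 : Measurable fun q : (Fin d → ℝ) × (Fin d → ℝ) =>
      h (fun i => if i ∈ insert j u then q.2 i else q.1 i) :=
    hmh.comp (measurable_mix (insert j u))
  have m2 : Measurable fun q : (Fin d → ℝ) × (Fin d → ℝ) =>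
      h (fun i => if i ∈ u then q.2 i else q.1 i) := hmh.comp (measurable_mix u)
  rw [lintegral_add_left (mf.const_mul 8), lintegral_add_left (m1.const_mul 4),
    lintegral_const_mul 8 mf, lintegral_const_mul 4 m1, lintegral_const_mul 4 m2]
  have e1 : ∫⁻ q : (Fin d → ℝ) × (Fin d → ℝ), h q.1 ∂(ν.prod ν) = ∫⁻ z, h z ∂ν :=
    hfstMP.lintegral_comp hmh
  have e2 : ∫⁻ q : (Fin d → ℝ) × (Fin d → ℝ),
      h (fun i => if i ∈ insert j u then q.2 i else q.1 i) ∂(ν.prod ν) = ∫⁻ z, h z ∂ν :=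
    hmix1.lintegral_comp hmh
  have e3 : ∫⁻ q : (Fin d → ℝ) × (Fin d → ℝ),
      h (fun i => if i ∈ u then q.2 i else q.1 i) ∂(ν.prod ν) = ∫⁻ z, h z ∂ν :=
    hmix2.lintegral_comp hmh
  rw [e1, e2, e3]
  ring

end VarGPF

end Aux

/-- If `M₄(f) = ∫ f⁴ dρ < ∞`, then the variance of the single-sample quantity
`g_{U_j(ℓ)}(x, y)` (with `x, y ∼ ρ` independent, `ℓ` uniform on `{0,…,d-1}` and `U_j(ℓ)`
a uniform subset of `[1:d]∖{j}` of cardinality `ℓ`) is bounded by `16 M₄(f)`;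
in particular it is finite. -/
theorem variance_gPF_le {d : ℕ} (μ : Fin d → Measure ℝ)
    [∀ i, IsProbabilityMeasure (μ i)] (f : (Fin d → ℝ) → ℝ)
    (hf : MemLp f 2 (Measure.pi μ))
    (hf4 : Integrable (fun x => (f x) ^ 4) (Measure.pi μ)) (j : Fin d) :
    ProbabilityTheory.evariance (fun p => gPF f j p.2.2 p.1 p.2.1)
        ((Measure.pi μ).prod ((Measure.pi μ).prod (subsetLaw d j))) ≤
      ENNReal.ofReal (16 * ∫ x, (f x) ^ 4 ∂Measure.pi μ) ∧
    ProbabilityTheory.variance (fun p => gPF f j p.2.2 p.1 p.2.1)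
        ((Measure.pi μ).prod ((Measure.pi μ).prod (subsetLaw d j))) ≤
      16 * ∫ x, (f x) ^ 4 ∂Measure.pi μ := by
  classical
  have hM0 : 0 ≤ ∫ x, (f x) ^ 4 ∂Measure.pi μ := integral_nonneg fun x => by positivity
  obtain ⟨F, hFsm, hFeq⟩ : ∃ F, StronglyMeasurable F ∧ f =ᵐ[Measure.pi μ] F :=
    ⟨hf.1.mk f, hf.1.stronglyMeasurable_mk, hf.1.ae_eq_mk⟩
  have hFmeas : Measurable F := hFsm.measurable
  have hN : (Measure.pi μ) {z | ¬ f z = F z} = 0 := ae_iff.mp hFeq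
  have hdecomp := VarGPF.prod_subsetLaw_decomp μ j
  haveI : IsProbabilityMeasure (subsetLaw d j) := by
    constructor
    unfold subsetLaw
    rw [Measure.finset_sum_apply]
    simp only [Measure.smul_apply, smul_eq_mul, measure_univ, mul_one]
    exact VarGPF.subsetLaw_mass j
  haveI : IsProbabilityMeasure
      ((Measure.pi μ).prod ((Measure.pi μ).prod (subsetLaw d j))) := by infer_instance
  have hemb : ∀ u : Finset (Fin d),
      MeasurableEmbedding (fun q : (Fin d → ℝ) × (Fin d → ℝ) => (q.1, (q.2, u))) := fun u =>
    MeasurableEmbedding.prodMap MeasurableEmbedding.id (measurableEmbedding_prod_mk_right u)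
  have hae : (fun p : (Fin d → ℝ) × ((Fin d → ℝ) × Finset (Fin d)) =>
        gPF f j p.2.2 p.1 p.2.1) =ᵐ[(Measure.pi μ).prod ((Measure.pi μ).prod (subsetLaw d j))]
      (fun p => gPF F j p.2.2 p.1 p.2.1) := by
    rw [Filter.EventuallyEq, ae_iff, hdecomp, Measure.finset_sum_apply]
    refine Finset.sum_eq_zero fun u hu => ?_
    rw [Measure.smul_apply, smul_eq_mul, (hemb u).map_apply]
    have hsub : (fun q : (Fin d → ℝ) × (Fin d → ℝ) => (q.1, (q.2, u))) ⁻¹'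
        {p : (Fin d → ℝ) × ((Fin d → ℝ) × Finset (Fin d)) |
          ¬ gPF f j p.2.2 p.1 p.2.1 = gPF F j p.2.2 p.1 p.2.1} ⊆
        (Prod.fst ⁻¹' {z | ¬ f z = F z}) ∪
          (((fun q : (Fin d → ℝ) × (Fin d → ℝ) =>
              fun i => if i ∈ insert j u then q.2 i else q.1 i) ⁻¹' {z | ¬ f z = F z}) ∪
            ((fun q : (Fin d → ℝ) × (Fin d → ℝ) =>
              fun i => if i ∈ u then q.2 i else q.1 i) ⁻¹' {z | ¬ f z = F z})) := by
      intro q hq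
      simp only [Set.mem_preimage, Set.mem_setOf_eq, Set.mem_union] at hq ⊢
      by_contra hcon
      push_neg at hcon
      obtain ⟨h1, h2, h3⟩ := hcon
      exact hq (by unfold gPF; rw [h1, h2, h3])
    refine mul_eq_zero_of_right _ (measure_mono_null hsub ?_)
    refine measure_union_null ?_ (measure_union_null ?_ ?_)
    · exact Measure.QuasiMeasurePreserving.preimage_null
        Measure.quasiMeasurePreserving_fst hN
    · exact (VarGPF.measurePreserving_mix μ (insert j u)).quasiMeasurePreserving.preimage_null hN
    · exact (VarGPF.measurePreserving_mix μ u).quasiMeasurePreserving.preimage_null hN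
  have hGm : Measurable (fun p : (Fin d → ℝ) × ((Fin d → ℝ) × Finset (Fin d)) =>
      gPF F j p.2.2 p.1 p.2.1) := by
    have h1 : Measurable (fun qu : ((Fin d → ℝ) × (Fin d → ℝ)) × Finset (Fin d) =>
        gPF F j qu.2 qu.1.1 qu.1.2) := by
      refine measurable_from_prod_countable_left fun u => ?_
      unfold gPF
      exact ((((hFmeas.comp measurable_fst).sub
          (hFmeas.comp (VarGPF.measurable_mix (insert j u)))).pow_const 2).const_mul _).sub
        ((((hFmeas.comp measurable_fst).sub
          (hFmeas.comp (VarGPF.measurable_mix u))).pow_const 2).const_mul _)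
    exact h1.comp ((measurable_fst.prodMk measurable_snd.fst).prodMk measurable_snd.snd)
  have hAESM : AEStronglyMeasurable (fun p : (Fin d → ℝ) × ((Fin d → ℝ) × Finset (Fin d)) =>
      gPF f j p.2.2 p.1 p.2.1) ((Measure.pi μ).prod ((Measure.pi μ).prod (subsetLaw d j))) :=
    ⟨_, hGm.stronglyMeasurable, hae⟩
  have hI : ∫⁻ x, ENNReal.ofReal (F x ^ 4) ∂Measure.pi μ =
      ENNReal.ofReal (∫ x, (f x) ^ 4 ∂Measure.pi μ) := by
    have e5 : ∫⁻ x, ENNReal.ofReal (F x ^ 4) ∂Measure.pi μ =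
        ∫⁻ x, ENNReal.ofReal (f x ^ 4) ∂Measure.pi μ :=
      lintegral_congr_ae (hFeq.mono fun x hx => by dsimp only; rw [hx])
    rw [e5, ← MeasureTheory.ofReal_integral_eq_lintegral_ofReal hf4
      (Filter.Eventually.of_forall fun x => by positivity)]
  have key : ProbabilityTheory.evariance (fun p => gPF f j p.2.2 p.1 p.2.1)
      ((Measure.pi μ).prod ((Measure.pi μ).prod (subsetLaw d j))) ≤
      ENNReal.ofReal (16 * ∫ x, (f x) ^ 4 ∂Measure.pi μ) := by
    have e1 : ProbabilityTheory.evariance (fun p => gPF f j p.2.2 p.1 p.2.1)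
        ((Measure.pi μ).prod ((Measure.pi μ).prod (subsetLaw d j))) ≤
        ∫⁻ p, (‖gPF f j p.2.2 p.1 p.2.1‖₊ : ℝ≥0∞) ^ 2
          ∂((Measure.pi μ).prod ((Measure.pi μ).prod (subsetLaw d j))) := by
      rw [ProbabilityTheory.evariance_def' hAESM]
      exact tsub_le_self
    have e2 : ∫⁻ p, (‖gPF f j p.2.2 p.1 p.2.1‖₊ : ℝ≥0∞) ^ 2
          ∂((Measure.pi μ).prod ((Measure.pi μ).prod (subsetLaw d j))) =
        ∫⁻ p, ENNReal.ofReal ((gPF F j p.2.2 p.1 p.2.1) ^ 2)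
          ∂((Measure.pi μ).prod ((Measure.pi μ).prod (subsetLaw d j))) := by
      refine lintegral_congr_ae (hae.mono fun p hp => ?_)
      dsimp only at hp ⊢
      rw [← hp, ← enorm_eq_nnnorm, Real.enorm_eq_ofReal_abs, ← ENNReal.ofReal_pow (abs_nonneg _), sq_abs]
    have e3 : ∫⁻ p, ENNReal.ofReal ((gPF F j p.2.2 p.1 p.2.1) ^ 2)
          ∂((Measure.pi μ).prod ((Measure.pi μ).prod (subsetLaw d j))) =
        ∑ u ∈ (Finset.univ.erase j).powerset,
          (((d : ℝ≥0∞) * ((d - 1).choose u.card : ℝ≥0∞))⁻¹) *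
            ∫⁻ q : (Fin d → ℝ) × (Fin d → ℝ), ENNReal.ofReal ((gPF F j u q.1 q.2) ^ 2)
              ∂((Measure.pi μ).prod (Measure.pi μ)) := by
      rw [hdecomp, lintegral_finset_sum_measure]
      refine Finset.sum_congr rfl fun u hu => ?_
      rw [lintegral_smul_measure, (hemb u).lintegral_map, smul_eq_mul]
    have e4 : ∑ u ∈ (Finset.univ.erase j).powerset,
          (((d : ℝ≥0∞) * ((d - 1).choose u.card : ℝ≥0∞))⁻¹) *
            (∫⁻ q : (Fin d → ℝ) × (Fin d → ℝ), ENNReal.ofReal ((gPF F j u q.1 q.2) ^ 2)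
              ∂((Measure.pi μ).prod (Measure.pi μ))) ≤
        ∑ u ∈ (Finset.univ.erase j).powerset,
          (((d : ℝ≥0∞) * ((d - 1).choose u.card : ℝ≥0∞))⁻¹) *
            (16 * ∫⁻ x, ENNReal.ofReal (F x ^ 4) ∂Measure.pi μ) := by
      refine Finset.sum_le_sum fun u hu => ?_
      exact mul_le_mul_right (VarGPF.lintegral_gPF_sq_le μ F hFmeas j u) _
    have e5 : ∑ u ∈ (Finset.univ.erase j).powerset,
          (((d : ℝ≥0∞) * ((d - 1).choose u.card : ℝ≥0∞))⁻¹) *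
            (16 * ∫⁻ x, ENNReal.ofReal (F x ^ 4) ∂Measure.pi μ) =
        ENNReal.ofReal (16 * ∫ x, (f x) ^ 4 ∂Measure.pi μ) := by
      rw [← Finset.sum_mul, VarGPF.subsetLaw_mass j, one_mul, hI,
        ENNReal.ofReal_mul (by norm_num : (0:ℝ) ≤ 16)]
      norm_num
    exact e1.trans (((e2.trans e3).trans_le (e4.trans (le_of_eq e5))))
  refine ⟨key, ?_⟩
  have hvar : ProbabilityTheory.variance (fun p => gPF f j p.2.2 p.1 p.2.1)
      ((Measure.pi μ).prod ((Measure.pi μ).prod (subsetLaw d j))) =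
      (ProbabilityTheory.evariance (fun p => gPF f j p.2.2 p.1 p.2.1)
        ((Measure.pi μ).prod ((Measure.pi μ).prod (subsetLaw d j)))).toReal := rfl
  rw [hvar]
  have := ENNReal.toReal_mono (ENNReal.ofReal_ne_top) key
  rwa [ENNReal.toReal_ofReal (by positivity)] at this
end
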